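/- arXiv:math/0407003 — 12 statements merged into one kernel-verified Lean document; each statement's English description precedes it below -/
import Mathlib

section
/- Let I be an ideal of A, and let ψ₁, ψ₂ : G → A/I be monoid homomorphisms (characters) such that for every g ∈ G one has tr ρ(g) ≡ ψ₁(g) + ψ₂(g) (mod I), and such that ψ₁(s) and ψ₂(s) are the images of λ₁ and λ₂ in A/I respectively. Then for all g, g′ ∈ G: a(g) − ψ₁(g) ∈ I (i.e. a(g) ≡ ψ₁(g) mod I), d(g) − ψ₂(g) ∈ I, and b(g)·c(g′) ∈ I. -/
/-- Let `A` be a commutative ring, `G` a group and `ρ : G → GL₂(A)` a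
representation, with matrix entries `a g = ρ g 0 0`, `b g = ρ g 0 1`, `c g = ρ g 1 0`,
`d g = ρ g 1 1`.  Fix `s ∈ G` with `ρ s` diagonal, whose diagonal entries `λ₁, λ₂` satisfy
that `λ₁ - λ₂` is a unit.  Let `I` be an ideal of `A` and `ψ₁ ψ₂ : G →* A/I` characters
(monoid homomorphisms) with `tr ρ(g) ≡ ψ₁ g + ψ₂ g (mod I)` for all `g`, and with `ψ₁ s`,
`ψ₂ s` the images of `λ₁`, `λ₂`.  Then for all `g, g' ∈ G` we have
`a g ≡ ψ₁ g`, `d g ≡ ψ₂ g (mod I)` and `b g * c g' ∈ I`. -/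
theorem stmt_1 {A : Type*} [CommRing A] {G : Type*} [Group G]
    (ρ : G →* Matrix (Fin 2) (Fin 2) A)
    (s : G) (h01 : ρ s 0 1 = 0) (h10 : ρ s 1 0 = 0)
    (hunit : IsUnit (ρ s 0 0 - ρ s 1 1))
    (I : Ideal A) (ψ₁ ψ₂ : G →* A ⧸ I)
    (htr : ∀ g : G, Ideal.Quotient.mk I (Matrix.trace (ρ g)) = ψ₁ g + ψ₂ g)
    (hs1 : ψ₁ s = Ideal.Quotient.mk I (ρ s 0 0))
    (hs2 : ψ₂ s = Ideal.Quotient.mk I (ρ s 1 1)) :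
    (∀ g : G, Ideal.Quotient.mk I (ρ g 0 0) = ψ₁ g) ∧
    (∀ g : G, Ideal.Quotient.mk I (ρ g 1 1) = ψ₂ g) ∧
    (∀ g g' : G, ρ g 0 1 * ρ g' 1 0 ∈ I) := by
  set π := Ideal.Quotient.mk I with hπ
  -- trace formula for products
  have tr2 : ∀ g g' : G, Matrix.trace (ρ (g * g')) =
      ρ g 0 0 * ρ g' 0 0 + ρ g 0 1 * ρ g' 1 0 + ρ g 1 0 * ρ g' 0 1 +
        ρ g 1 1 * ρ g' 1 1 := by
    intro g g'
    rw [map_mul]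
    simp [Matrix.trace, Matrix.diag, Fin.sum_univ_two, Matrix.mul_apply]
    ring
  have tr1 : ∀ g : G, Matrix.trace (ρ g) = ρ g 0 0 + ρ g 1 1 := by
    intro g; simp [Matrix.trace, Matrix.diag, Fin.sum_univ_two]
  have hu : IsUnit (π (ρ s 0 0) - π (ρ s 1 1)) := by
    simpa using hunit.map π
  have htrg : ∀ g : G, π (ρ g 0 0) + π (ρ g 1 1) = ψ₁ g + ψ₂ g := by
    intro g
    have h := htr g
    rw [tr1 g, map_add] at h
    exact h
  -- trace of ρ (s*g)
  have hsg : ∀ g : G, π (ρ s 0 0) * π (ρ g 0 0) + π (ρ s 1 1) * π (ρ g 1 1)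
      = π (ρ s 0 0) * ψ₁ g + π (ρ s 1 1) * ψ₂ g := by
    intro g
    have h := htr (s * g)
    rw [tr2 s g, h01, h10, map_mul ψ₁, map_mul ψ₂, hs1, hs2] at h
    rw [map_add, map_add, map_add, map_mul, map_mul, map_mul, map_mul] at h
    simpa using h
  have ha : ∀ g : G, π (ρ g 0 0) = ψ₁ g := by
    intro g
    have key : (π (ρ s 0 0) - π (ρ s 1 1)) * (π (ρ g 0 0) - ψ₁ g) =
        (π (ρ s 0 0) - π (ρ s 1 1)) * 0 := by
      have h1 := hsg g
      have h2 := htrg g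
      ring_nf
      linear_combination h1 - π (ρ s 1 1) * h2
    have := hu.mul_left_cancel key
    rw [mul_zero] at key
    have := sub_eq_zero.mp (hu.mul_left_cancel (by rw [mul_zero]; exact key))
    exact this
  have hd : ∀ g : G, π (ρ g 1 1) = ψ₂ g := by
    intro g
    have h := htrg g
    rw [ha g] at h
    exact add_left_cancel h
  refine ⟨ha, hd, ?_⟩
  intro g g'
  have h1 := htr (g * g')
  rw [tr2 g g', map_mul ψ₁, map_mul ψ₂] at h1
  rw [map_add, map_add, map_add, map_mul, map_mul, map_mul, map_mul,
    ha g, ha g', hd g, hd g'] at h1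
  -- h1 : ψ₁ g * ψ₁ g' + π(b c') + π(c b') + ψ₂ g ψ₂ g' = ψ₁ g ψ₁ g' + ψ₂ g ψ₂ g'
  have e1 : π (ρ g 0 1) * π (ρ g' 1 0) + π (ρ g 1 0) * π (ρ g' 0 1) = 0 := by
    linear_combination h1
  have h2 := htr (g * s * g')
  have trsg : Matrix.trace (ρ (g * s * g')) =
      ρ g 0 0 * ρ s 0 0 * ρ g' 0 0 + ρ g 0 1 * ρ s 1 1 * ρ g' 1 0 +
        ρ g 1 0 * ρ s 0 0 * ρ g' 0 1 + ρ g 1 1 * ρ s 1 1 * ρ g' 1 1 := by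
    rw [map_mul, map_mul]
    simp [Matrix.trace, Matrix.diag, Fin.sum_univ_two, Matrix.mul_apply, h01, h10]
    ring
  rw [trsg, map_mul ψ₁, map_mul ψ₁, map_mul ψ₂, map_mul ψ₂, hs1, hs2] at h2
  rw [map_add, map_add, map_add, map_mul, map_mul, map_mul, map_mul,
    map_mul, map_mul, map_mul, map_mul, ha g, ha g', hd g, hd g'] at h2
  have e2 : π (ρ s 1 1) * (π (ρ g 0 1) * π (ρ g' 1 0)) +
      π (ρ s 0 0) * (π (ρ g 1 0) * π (ρ g' 0 1)) = 0 := by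
    linear_combination h2
  have key : (π (ρ s 0 0) - π (ρ s 1 1)) * (π (ρ g 0 1) * π (ρ g' 1 0)) = 0 := by
    linear_combination π (ρ s 0 0) * e1 - e2
  have hz : π (ρ g 0 1) * π (ρ g' 1 0) = 0 :=
    sub_eq_zero.mp (hu.mul_left_cancel (by rw [mul_zero]; linear_combination key))
  rw [← Ideal.Quotient.eq_zero_iff_mem, map_mul]
  exact hz
end

section
/- Let I be a proper ideal of A, and let ψ₁, ψ₂ : G → (A/I)ˣ be group homomorphisms into the units of A/I such that for every g ∈ G one has tr ρ(g) ≡ ψ₁(g) + ψ₂(g) (mod I), and such that ψ₁(s) and ψ₂(s) are the images of λ₁ and λ₂ in A/I respectively. Then there is an injective (A/I)-linear map from Hom_A(B/IB, A/I) to H¹(G, (A/I)(ψ₁ψ₂⁻¹)), where (A/I)(ψ₁ψ₂⁻¹) is the rank-one representation of G on A/I in which g acts by multiplication by ψ₁(g)ψ₂(g)⁻¹. (This cohomology group is identified with Ext¹_{(A/I)[G]}(ψ₂, ψ₁).) -/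
set_option linter.unusedRCasesPattern false

/-- The rank-one representation of `G` on `k` attached to a character `χ : G → kˣ`:
`g` acts on `k` by multiplication by `χ g`. -/
noncomputable def charRep {k : Type*} [CommRing k] {G : Type*} [Group G] (χ : G →* kˣ) :
    Representation k G k where
  toFun g :=
    { toFun := fun x => (χ g : k) * x
      map_add' := fun x y => by ring
      map_smul' := fun c x => by simp [smul_eq_mul]; ring }
  map_one' := by ext x; simp
  map_mul' g h := by ext x; simp [Module.End.mul_apply, mul_assoc]

universe u

/-- Let `ρ : G → GL₂(A)` be a representation with `ρ s` diagonal, whose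
diagonal entries `λ₁ = ρ s 0 0`, `λ₂ = ρ s 1 1` have unit difference.  Let `B` be the
ideal generated by the entries `b g = ρ g 0 1`.  Let `I` be a proper ideal and
`ψ₁, ψ₂ : G → (A/I)ˣ` characters with `tr ρ(g) ≡ ψ₁ g + ψ₂ g (mod I)` and `ψ₁ s, ψ₂ s`
the images of `λ₁, λ₂`.  Then there is an injective `(A/I)`-linear map from
`Hom_A(B/IB, A/I)` to `H¹(G, (A/I)(ψ₁ψ₂⁻¹))`. -/
theorem stmt_2 {A G : Type u} [CommRing A] [Group G]
    (ρ : G →* Matrix (Fin 2) (Fin 2) A)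
    (s : G) (h01 : ρ s 0 1 = 0) (h10 : ρ s 1 0 = 0)
    (hunit : IsUnit (ρ s 0 0 - ρ s 1 1))
    (I : Ideal A) (hI : I ≠ ⊤)
    (ψ₁ ψ₂ : G →* (A ⧸ I)ˣ)
    (htr : ∀ g : G,
      Ideal.Quotient.mk I (Matrix.trace (ρ g)) = (ψ₁ g : A ⧸ I) + (ψ₂ g : A ⧸ I))
    (hs1 : (ψ₁ s : A ⧸ I) = Ideal.Quotient.mk I (ρ s 0 0))
    (hs2 : (ψ₂ s : A ⧸ I) = Ideal.Quotient.mk I (ρ s 1 1))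
    (B : Ideal A) (hB : B = Ideal.span (Set.range fun g : G => ρ g 0 1)) :
    ∃ f : ((↥B ⧸ (I • (⊤ : Submodule A ↥B))) →ₗ[A] A ⧸ I) →ₗ[A ⧸ I]
        groupCohomology.H1 (Rep.of (charRep (ψ₁ * ψ₂⁻¹))),
      Function.Injective f := by
  classical
  set π := Ideal.Quotient.mk I with hπdef
  -- smul on the quotient
  have hsmul : ∀ (a : A) (x : A ⧸ I), a • x = π a * x := fun a x => by
    rw [Algebra.smul_def, Ideal.Quotient.algebraMap_eq]
  -- basic congruences
  have htr' : ∀ g : G, π (ρ g 0 0) + π (ρ g 1 1) = (ψ₁ g : A ⧸ I) + ψ₂ g := fun g => by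
    have h := htr g
    rwa [Matrix.trace_fin_two, map_add] at h
  have hstr : ∀ g : G, π (ρ s 0 0) * π (ρ g 0 0) + π (ρ s 1 1) * π (ρ g 1 1)
      = π (ρ s 0 0) * (ψ₁ g : A ⧸ I) + π (ρ s 1 1) * (ψ₂ g : A ⧸ I) := fun g => by
    have h := htr (s * g)
    have e : Matrix.trace (ρ (s * g)) = ρ s 0 0 * ρ g 0 0 + ρ s 1 1 * ρ g 1 1 := by
      rw [map_mul, Matrix.trace_fin_two, Matrix.mul_apply, Matrix.mul_apply,
        Fin.sum_univ_two, Fin.sum_univ_two, h01, h10]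
      ring
    rw [e, map_add, map_mul, map_mul, map_mul ψ₁, map_mul ψ₂] at h
    rw [Units.val_mul, Units.val_mul, hs1, hs2] at h
    exact h
  have hu : IsUnit (π (ρ s 0 0) - π (ρ s 1 1)) := by
    rw [← map_sub]; exact hunit.map π
  have ha : ∀ g : G, π (ρ g 0 0) = ψ₁ g := fun g => by
    have h1 := htr' g
    have h2 := hstr g
    have h3 : (π (ρ s 0 0) - π (ρ s 1 1)) * (π (ρ g 0 0) - (ψ₁ g : A ⧸ I)) = 0 := by
      linear_combination h2 - π (ρ s 1 1) * h1
    have h4 := (hu.mul_right_eq_zero).mp h3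
    linear_combination h4
  have hd : ∀ g : G, π (ρ g 1 1) = ψ₂ g := fun g => by
    linear_combination htr' g - ha g
  -- the ideal B
  subst hB
  set B : Ideal A := Ideal.span (Set.range fun g : G => ρ g 0 1) with hBdef
  have hmem : ∀ g : G, ρ g 0 1 ∈ B := fun g => Ideal.subset_span ⟨g, rfl⟩
  set bel : G → ↥B := fun g => ⟨ρ g 0 1, hmem g⟩ with hbel
  set Q : Submodule A ↥B := I • (⊤ : Submodule A ↥B) with hQ
  set m : ↥B →ₗ[A] ↥B ⧸ Q := Q.mkQ with hm
  have hbel_mul : ∀ g h : G, bel (g * h) = ρ g 0 0 • bel h + ρ h 1 1 • bel g := fun g h => by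
    apply Subtype.ext
    show ρ (g * h) 0 1 = ρ g 0 0 * ρ h 0 1 + ρ h 1 1 * ρ g 0 1
    rw [map_mul, Matrix.mul_apply, Fin.sum_univ_two]
    ring
  have hbel_s : bel s = 0 := Subtype.ext h01
  set V := Rep.of (charRep (ψ₁ * ψ₂⁻¹)) with hV
  have hinv : ∀ g : G, (((ψ₂ g)⁻¹ : (A ⧸ I)ˣ) : A ⧸ I) * (ψ₂ g : A ⧸ I) = 1 := fun g => by
    rw [← Units.val_mul, inv_mul_cancel, Units.val_one]
  have hφval : ∀ (φ : (↥B ⧸ Q) →ₗ[A] A ⧸ I) (g h : G),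
      φ (m (bel (g * h))) = (ψ₁ g : A ⧸ I) * φ (m (bel h)) + (ψ₂ h : A ⧸ I) * φ (m (bel g)) :=
    fun φ g h => by
      rw [hbel_mul g h]
      simp only [map_add, map_smul, hsmul, ha, hd]
  have hcocycle : ∀ φ : (↥B ⧸ Q) →ₗ[A] A ⧸ I,
      (fun g => φ (m (bel g)) * (((ψ₂ g)⁻¹ : (A ⧸ I)ˣ) : A ⧸ I)) ∈ groupCohomology.cocycles₁ V := by
    intro φ
    rw [groupCohomology.mem_cocycles₁_iff]
    intro g h
    show φ (m (bel (g * h))) * (((ψ₂ (g * h))⁻¹ : (A ⧸ I)ˣ) : A ⧸ I)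
      = ((ψ₁ g : A ⧸ I) * (((ψ₂ g)⁻¹ : (A ⧸ I)ˣ) : A ⧸ I))
          * (φ (m (bel h)) * (((ψ₂ h)⁻¹ : (A ⧸ I)ˣ) : A ⧸ I))
        + φ (m (bel g)) * (((ψ₂ g)⁻¹ : (A ⧸ I)ˣ) : A ⧸ I)
    rw [hφval φ g h]
    have e2 : (((ψ₂ (g * h))⁻¹ : (A ⧸ I)ˣ) : A ⧸ I)
        = (((ψ₂ g)⁻¹ : (A ⧸ I)ˣ) : A ⧸ I) * (((ψ₂ h)⁻¹ : (A ⧸ I)ˣ) : A ⧸ I) := by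
      rw [← Units.val_mul, map_mul, mul_inv]
    rw [e2]
    linear_combination (φ (m (bel g)) * (((ψ₂ g)⁻¹ : (A ⧸ I)ˣ) : A ⧸ I)) * hinv h
  set F : ((↥B ⧸ Q) →ₗ[A] A ⧸ I) →ₗ[A ⧸ I] groupCohomology.cocycles₁ V :=
    { toFun := fun φ => ⟨fun g => φ (m (bel g)) * (((ψ₂ g)⁻¹ : (A ⧸ I)ˣ) : A ⧸ I), hcocycle φ⟩
      map_add' := fun φ φ' => by
        apply Subtype.ext
        funext g
        show (φ + φ') (m (bel g)) * _ = φ (m (bel g)) * _ + φ' (m (bel g)) * _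
        simp [add_mul]
      map_smul' := fun r φ => by
        apply Subtype.ext
        funext g
        show (r • φ) (m (bel g)) * _ = r * (φ (m (bel g)) * _)
        simp [smul_eq_mul, mul_assoc] } with hF
  refine ⟨(groupCohomology.H1π V).hom.comp F, ?_⟩
  rw [injective_iff_map_eq_zero]
  intro φ hφ
  have hmem' : ⇑(F φ) ∈ groupCohomology.coboundaries₁ V :=
    (groupCohomology.H1π_eq_zero_iff _).mp hφ
  obtain ⟨x, hx⟩ := hmem'
  let x' : A ⧸ I := x
  have hx' : ∀ g : G, ((ψ₁ g : A ⧸ I) * (((ψ₂ g)⁻¹ : (A ⧸ I)ˣ) : A ⧸ I)) * x' - x'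
      = φ (m (bel g)) * (((ψ₂ g)⁻¹ : (A ⧸ I)ˣ) : A ⧸ I) := fun g => congrFun hx g
  have hFs : φ (m (bel s)) * (((ψ₂ s)⁻¹ : (A ⧸ I)ˣ) : A ⧸ I) = 0 := by
    rw [hbel_s, map_zero, map_zero, zero_mul]
  have hxs : ((ψ₁ s : A ⧸ I) * (((ψ₂ s)⁻¹ : (A ⧸ I)ˣ) : A ⧸ I) - 1) * x' = 0 := by
    have h := hx' s
    rw [hFs] at h
    linear_combination h
  have hu2 : IsUnit ((ψ₁ s : A ⧸ I) * (((ψ₂ s)⁻¹ : (A ⧸ I)ˣ) : A ⧸ I) - 1) := by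
    have e : ((ψ₁ s : A ⧸ I) * (((ψ₂ s)⁻¹ : (A ⧸ I)ˣ) : A ⧸ I) - 1) * (ψ₂ s : A ⧸ I)
        = π (ρ s 0 0) - π (ρ s 1 1) := by
      rw [← hs1, ← hs2]
      linear_combination (ψ₁ s : A ⧸ I) * hinv s
    exact isUnit_of_mul_isUnit_left (e ▸ hu)
  have hx0 : x' = 0 := (hu2.mul_right_eq_zero).mp hxs
  have hvan : ∀ g : G, φ (m (bel g)) = 0 := by
    intro g
    have h := hx' g
    rw [hx0, mul_zero, sub_zero] at h
    have e1 : φ (m (bel g)) * (((ψ₂ g)⁻¹ : (A ⧸ I)ˣ) : A ⧸ I) = 0 := h.symm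
    calc φ (m (bel g))
        = φ (m (bel g)) * ((((ψ₂ g)⁻¹ : (A ⧸ I)ˣ) : A ⧸ I) * (ψ₂ g : A ⧸ I)) := by
          rw [hinv g, mul_one]
      _ = (φ (m (bel g)) * (((ψ₂ g)⁻¹ : (A ⧸ I)ˣ) : A ⧸ I)) * (ψ₂ g : A ⧸ I) := by ring
      _ = 0 := by rw [e1, zero_mul]
  -- conclude φ = 0
  have hclaim : ∀ (a : A) (haB : a ∈ B), φ (m ⟨a, haB⟩) = 0 := by
    intro a haB
    induction haB using Submodule.span_induction with
    | mem y hy =>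
        obtain ⟨g, rfl⟩ := hy
        exact hvan g
    | zero =>
        have : (⟨(0 : A), Submodule.zero_mem B⟩ : ↥B) = 0 := rfl
        rw [this, map_zero, map_zero]
    | add y z hy hz ihy ihz =>
        have : (⟨y + z, Submodule.add_mem B hy hz⟩ : ↥B)
            = ⟨y, hy⟩ + ⟨z, hz⟩ := rfl
        rw [this, map_add, map_add, ihy, ihz, add_zero]
    | smul r y hy ihy =>
        have : (⟨r • y, Submodule.smul_mem B r hy⟩ : ↥B) = r • (⟨y, hy⟩ : ↥B) := rfl
        rw [this, map_smul, map_smul, ihy, smul_zero]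
  apply LinearMap.ext
  intro z
  obtain ⟨y, rfl⟩ := Submodule.Quotient.mk_surjective Q z
  have : (Submodule.Quotient.mk y : ↥B ⧸ Q) = m y := rfl
  rw [this]
  obtain ⟨yv, hy⟩ := y
  rw [hclaim yv hy]
  rfl
end

section
/- (i) The maps g ↦ a(g) mod BC and g ↦ d(g) mod BC are monoid homomorphisms (characters) ψ₁, ψ₂ : G → A/BC satisfying tr ρ(g) ≡ ψ₁(g) + ψ₂(g) (mod BC) for all g, with ψ₁(s), ψ₂(s) the images of λ₁, λ₂. (ii) Conversely, if I is any ideal of A for which there exist monoid homomorphisms ψ₁, ψ₂ : G → A/I with tr ρ(g) ≡ ψ₁(g) + ψ₂(g) (mod I) for all g ∈ G and with ψ₁(s), ψ₂(s) equal to the images of λ₁, λ₂ in A/I, then BC ⊆ I. In particular BC is the largest ideal I of A such that tr ρ mod I is the sum of two such characters (the ideal of reducibility), and the ideal of reducibility equals BC. -/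
/-- With `ρ : G → GL₂(A)`, `s` diagonal with `λ₁ - λ₂` a unit, and
`B` (resp. `C`) the ideal generated by the values `b g = ρ g 0 1` (resp. `c g = ρ g 1 0`):
(i) `g ↦ a g mod BC` and `g ↦ d g mod BC` are characters `ψ₁, ψ₂ : G → A/BC` with
`tr ρ(g) ≡ ψ₁ g + ψ₂ g (mod BC)` and `ψ₁ s, ψ₂ s` the images of `λ₁, λ₂`;
(ii) conversely for any ideal `I` admitting such a pair of characters one has `BC ⊆ I`.
Hence `BC` is the ideal of reducibility. -/
theorem stmt_3 {A : Type*} [CommRing A] {G : Type*} [Group G]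
    (ρ : G →* Matrix (Fin 2) (Fin 2) A)
    (s : G) (h01 : ρ s 0 1 = 0) (h10 : ρ s 1 0 = 0)
    (hunit : IsUnit (ρ s 0 0 - ρ s 1 1))
    (B C : Ideal A)
    (hB : B = Ideal.span (Set.range fun g : G => ρ g 0 1))
    (hC : C = Ideal.span (Set.range fun g : G => ρ g 1 0)) :
    (∃ ψ₁ ψ₂ : G →* A ⧸ (B * C),
      (∀ g : G, ψ₁ g = Ideal.Quotient.mk (B * C) (ρ g 0 0)) ∧
      (∀ g : G, ψ₂ g = Ideal.Quotient.mk (B * C) (ρ g 1 1)) ∧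
      (∀ g : G, Ideal.Quotient.mk (B * C) (Matrix.trace (ρ g)) = ψ₁ g + ψ₂ g) ∧
      ψ₁ s = Ideal.Quotient.mk (B * C) (ρ s 0 0) ∧
      ψ₂ s = Ideal.Quotient.mk (B * C) (ρ s 1 1)) ∧
    (∀ I : Ideal A, ∀ ψ₁ ψ₂ : G →* A ⧸ I,
      (∀ g : G, Ideal.Quotient.mk I (Matrix.trace (ρ g)) = ψ₁ g + ψ₂ g) →
      ψ₁ s = Ideal.Quotient.mk I (ρ s 0 0) →
      ψ₂ s = Ideal.Quotient.mk I (ρ s 1 1) →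
      B * C ≤ I) := by
  -- matrix multiplication formulas
  have key00 : ∀ g h : G, ρ (g*h) 0 0 = ρ g 0 0 * ρ h 0 0 + ρ g 0 1 * ρ h 1 0 := by
    intro g h; simp [map_mul, Matrix.mul_apply, Fin.sum_univ_two]
  have key01 : ∀ g h : G, ρ (g*h) 0 1 = ρ g 0 0 * ρ h 0 1 + ρ g 0 1 * ρ h 1 1 := by
    intro g h; simp [map_mul, Matrix.mul_apply, Fin.sum_univ_two]
  have key10 : ∀ g h : G, ρ (g*h) 1 0 = ρ g 1 0 * ρ h 0 0 + ρ g 1 1 * ρ h 1 0 := by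
    intro g h; simp [map_mul, Matrix.mul_apply, Fin.sum_univ_two]
  have key11 : ∀ g h : G, ρ (g*h) 1 1 = ρ g 1 0 * ρ h 0 1 + ρ g 1 1 * ρ h 1 1 := by
    intro g h; simp [map_mul, Matrix.mul_apply, Fin.sum_univ_two]
  have hone00 : ρ 1 0 0 = 1 := by simp
  have hone11 : ρ 1 1 1 = 1 := by simp
  have htr : ∀ g : G, Matrix.trace (ρ g) = ρ g 0 0 + ρ g 1 1 := by
    intro g; rw [Matrix.trace_fin_two]
  have hmemB : ∀ g : G, ρ g 0 1 ∈ B := by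
    intro g; rw [hB]; exact Ideal.subset_span ⟨g, rfl⟩
  have hmemC : ∀ g : G, ρ g 1 0 ∈ C := by
    intro g; rw [hC]; exact Ideal.subset_span ⟨g, rfl⟩
  constructor
  · refine ⟨⟨⟨fun g => Ideal.Quotient.mk (B*C) (ρ g 0 0), by show Ideal.Quotient.mk (B*C) (ρ 1 0 0) = 1; rw [hone00, map_one]⟩, ?_⟩,
      ⟨⟨fun g => Ideal.Quotient.mk (B*C) (ρ g 1 1), by show Ideal.Quotient.mk (B*C) (ρ 1 1 1) = 1; rw [hone11, map_one]⟩, ?_⟩,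
      fun g => rfl, fun g => rfl, ?_, rfl, rfl⟩
    · intro g h
      have hz : Ideal.Quotient.mk (B*C) (ρ g 0 1 * ρ h 1 0) = 0 := by
        rw [Ideal.Quotient.eq_zero_iff_mem]
        exact Ideal.mul_mem_mul (hmemB g) (hmemC h)
      simp only [key00, map_add, map_mul, hz]
      ring
    · intro g h
      have hz : Ideal.Quotient.mk (B*C) (ρ g 1 0) * Ideal.Quotient.mk (B*C) (ρ h 0 1) = 0 := by
        rw [← map_mul, mul_comm (ρ g 1 0) (ρ h 0 1), Ideal.Quotient.eq_zero_iff_mem]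
        exact Ideal.mul_mem_mul (hmemB h) (hmemC g)
      simp only [key11, map_add, map_mul]
      rw [hz, zero_add]
    · intro g
      simp only [htr, map_add, MonoidHom.coe_mk, OneHom.coe_mk]
  · intro I ψ₁ ψ₂ htrI hs1 hs2
    set q : A →+* A ⧸ I := Ideal.Quotient.mk I with hq
    set u : G → A ⧸ I := fun g => ψ₁ g - q (ρ g 0 0) with hu
    have hψ1 : ∀ g, ψ₁ g = q (ρ g 0 0) + u g := by intro g; simp [hu]
    have hψ2 : ∀ g, ψ₂ g = q (ρ g 1 1) - u g := by
      intro g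
      have h := htrI g
      rw [htr g, map_add] at h
      simp only [hu]
      linear_combination -h
    have us : u s = 0 := by simp [hu, hs1]
    have u1 : u 1 = 0 := by simp [hu, hone00]
    have E1 : ∀ g h : G, u (g*h) =
        q (ρ g 0 0) * u h + q (ρ h 0 0) * u g + u g * u h - q (ρ g 0 1 * ρ h 1 0) := by
      intro g h
      have hm := ψ₁.map_mul g h
      rw [hψ1 (g*h), hψ1 g, hψ1 h, key00 g h, map_add, map_mul, map_mul] at hm
      linear_combination hm + map_mul q (ρ g 0 1) (ρ h 1 0)
    have E2 : ∀ g h : G, u (g*h) =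
        q (ρ g 1 1) * u h + q (ρ h 1 1) * u g - u g * u h + q (ρ g 1 0 * ρ h 0 1) := by
      intro g h
      have hm := ψ₂.map_mul g h
      rw [hψ2 (g*h), hψ2 g, hψ2 h, key11 g h, map_add, map_mul, map_mul] at hm
      linear_combination -hm - map_mul q (ρ g 1 0) (ρ h 0 1)
    have ugs : ∀ g : G, u (g*s) = q (ρ s 0 0) * u g := by
      intro g
      have := E1 g s
      rw [h10, mul_zero, map_zero, us] at this
      rw [this]; ring
    have ush : ∀ h : G, u (s*h) = q (ρ s 0 0) * u h := by
      intro h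
      have := E1 s h
      rw [h01, zero_mul, map_zero, us] at this
      rw [this]; ring
    have hd : ∀ g h : G,
        q (ρ s 0 0 - ρ s 1 1) * (q (ρ g 1 1) * u h - q (ρ h 1 1) * u g) = 0 := by
      intro g h
      have H1 := E2 (g*s) h
      rw [key11 g s, h01, mul_zero, zero_add, key10 g s, h10, mul_zero, add_zero,
        ugs g] at H1
      have H2 := E2 g (s*h)
      rw [key11 s h, h10, zero_mul, zero_add, key01 s h, h01, zero_mul, add_zero,
        ush h, ← mul_assoc] at H2
      have := H1.symm.trans H2
      simp only [map_mul, map_sub] at this ⊢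
      linear_combination -this
    have hqu : IsUnit (q (ρ s 0 0 - ρ s 1 1)) := hunit.map q
    have hu0 : ∀ g : G, u g = 0 := by
      intro g
      have h := hd g 1
      rw [u1, hone11, map_one, mul_zero, zero_sub, one_mul, mul_neg,
        neg_eq_zero] at h
      obtain ⟨v, hv⟩ := hqu
      have := congrArg (fun x => (↑v⁻¹ : A ⧸ I) * x) h
      simp only [mul_zero, ← mul_assoc, ← hv, ← Units.val_mul, inv_mul_cancel,
        Units.val_one, one_mul] at this
      exact this
    have hmem : ∀ g h : G, ρ g 0 1 * ρ h 1 0 ∈ I := by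
      intro g h
      rw [← Ideal.Quotient.eq_zero_iff_mem]
      have := E1 g h
      rw [hu0, hu0, hu0] at this
      change q _ = 0
      linear_combination this
    rw [hB, hC, Ideal.span_mul_span, Ideal.span_le]
    rintro x hx
    simp only [Set.mem_mul] at hx
    obtain ⟨p, ⟨g, rfl⟩, r, ⟨h, rfl⟩, rfl⟩ := hx
    exact hmem g h
end

section
/- Assume in addition that A is a noetherian local ring with maximal ideal m and residue field k = A/m, and that the ideal of reducibility BC equals m. Let χ₁, χ₂ : G → kˣ be the characters given by the reductions of a and d modulo m, and suppose dim_k H¹(G, k(χ₁χ₂⁻¹)) = 1 and dim_k H¹(G, k(χ₂χ₁⁻¹)) = 1 (i.e. Ext¹_{k[G]}(χ₂, χ₁) and Ext¹_{k[G]}(χ₁, χ₂) are one-dimensional over k). Then the maximal ideal m of A is principal. If moreover the residue field k has positive characteristic p and A admits a surjective ring homomorphism onto a nonzero ring of characteristic zero, then A is a discrete valuation ring. -/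
set_option linter.unusedRCasesPattern false

universe u

set_option maxHeartbeats 4000000

open IsLocalRing groupCohomology

lemma key_principal {A : Type u} [CommRing A] [IsNoetherianRing A] [IsLocalRing A]
    {G : Type u} [Group G] (a b d : G → A)
    (hmul : ∀ g h : G, b (g * h) = a g * b h + b g * d h)
    (s : G) (hbs : b s = 0) (hunit : IsUnit (a s - d s))
    (χ₁ χ₂ : G →* (ResidueField A)ˣ)
    (hχ₁ : ∀ g, (χ₁ g : ResidueField A) = residue A (a g))
    (hχ₂ : ∀ g, (χ₂ g : ResidueField A) = residue A (d g))
    (hdim : Module.finrank (ResidueField A)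
      (groupCohomology.H1 (Rep.of (charRep (χ₁ * χ₂⁻¹)))) = 1) :
    (Ideal.span (Set.range b)).IsPrincipal := by
  classical
  set 𝕜 := ResidueField A with h𝕜
  set 𝔪 := maximalIdeal A with h𝔪
  set B : Ideal A := Ideal.span (Set.range b) with hB
  have hmem : ∀ g, b g ∈ B := fun g => Ideal.subset_span ⟨g, rfl⟩
  letI : Module 𝕜 (↥B ⧸ (𝔪 • ⊤ : Submodule A ↥B)) :=
    (inferInstance : Module (A ⧸ 𝔪) (↥B ⧸ 𝔪 • (⊤ : Submodule A ↥B)))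
  letI : IsScalarTower A 𝕜 (↥B ⧸ (𝔪 • ⊤ : Submodule A ↥B)) :=
    (inferInstance : IsScalarTower A (A ⧸ 𝔪) (↥B ⧸ 𝔪 • (⊤ : Submodule A ↥B)))
  set V := ↥B ⧸ (𝔪 • ⊤ : Submodule A ↥B) with hV
  -- the A-linear functional attached to a k-functional on V
  set φ : Module.Dual 𝕜 V → (↥B →ₗ[A] 𝕜) := fun ψ =>
    (ψ.restrictScalars A).comp (Submodule.mkQ (𝔪 • ⊤ : Submodule A ↥B)) with hφ
  have hφ_smul : ∀ (ψ : Module.Dual 𝕜 V) (r : A) (x : ↥B), φ ψ (r • x) = residue A r * φ ψ x := by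
    intro ψ r x
    rw [map_smul, Algebra.smul_def]
    rfl
  -- the cocycle attached to ψ
  have hcoc : ∀ ψ : Module.Dual 𝕜 V,
      (fun g : G => φ ψ ⟨b g, hmem g⟩ * ((χ₂ g)⁻¹ : 𝕜ˣ)) ∈
        cocycles₁ (Rep.of (charRep (χ₁ * χ₂⁻¹))) := by
    intro ψ
    rw [mem_cocycles₁_iff]
    intro g h
    show φ ψ ⟨b (g * h), hmem _⟩ * ((χ₂ (g * h))⁻¹ : 𝕜ˣ) =
      ((χ₁ * χ₂⁻¹) g : 𝕜) * (φ ψ ⟨b h, hmem h⟩ * ((χ₂ h)⁻¹ : 𝕜ˣ)) +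
      φ ψ ⟨b g, hmem g⟩ * ((χ₂ g)⁻¹ : 𝕜ˣ)
    have hb : (⟨b (g * h), hmem _⟩ : ↥B) = a g • ⟨b h, hmem h⟩ + d h • ⟨b g, hmem g⟩ := by
      apply Subtype.ext
      simp [smul_eq_mul, hmul g h]
      ring
    rw [hb, map_add, hφ_smul, hφ_smul, ← hχ₁, ← hχ₂]
    have h2 : ((χ₂ (g * h))⁻¹ : 𝕜ˣ) = ((χ₂ g)⁻¹ * (χ₂ h)⁻¹ : 𝕜ˣ) := by
      rw [map_mul, mul_inv_rev, mul_comm]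
    rw [h2]
    push_cast
    rw [MonoidHom.mul_apply, MonoidHom.inv_apply, Units.val_mul, Units.val_inv_eq_inv_val]
    have hg0 : ((χ₂ g)⁻¹ : 𝕜ˣ) * (χ₂ g : 𝕜) = 1 := by
      rw [mul_comm]; exact_mod_cast (χ₂ g).mul_inv
    have hh0 : (χ₂ h : 𝕜) * ((χ₂ h)⁻¹ : 𝕜ˣ) = 1 := by exact_mod_cast (χ₂ h).mul_inv
    field_simp
    ring
  set W := groupCohomology.H1 (Rep.of (charRep (χ₁ * χ₂⁻¹))) with hW
  set Φ : Module.Dual 𝕜 V →ₗ[𝕜] W :=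
    { toFun := fun ψ => (H1π _).hom ⟨_, hcoc ψ⟩
      map_add' := by
        intro ψ₁ ψ₂
        beta_reduce
        rw [← map_add]
        refine congrArg _ (Subtype.ext (funext fun g => ?_))
        show φ (ψ₁ + ψ₂) ⟨b g, hmem g⟩ * _ = φ ψ₁ ⟨b g, hmem g⟩ * _ + φ ψ₂ ⟨b g, hmem g⟩ * _
        simp only [hφ, LinearMap.coe_comp, Function.comp_apply, LinearMap.restrictScalars_comp]
        show ((ψ₁ + ψ₂) _) * _ = _
        rw [LinearMap.add_apply, add_mul]
        rfl
      map_smul' := by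
        intro r ψ
        beta_reduce
        rw [RingHom.id_apply, ← map_smul]
        refine congrArg _ (Subtype.ext (funext fun g => ?_))
        show φ (r • ψ) ⟨b g, hmem g⟩ * _ = r • (φ ψ ⟨b g, hmem g⟩ * _)
        show ((r • ψ) _) * _ = r • (φ ψ ⟨b g, hmem g⟩ * _)
        rw [LinearMap.smul_apply, smul_eq_mul, smul_eq_mul, mul_assoc]
        rfl } with hΦ
  have hinj : Function.Injective Φ := by
    rw [injective_iff_map_eq_zero]
    intro ψ hψ
    have h0 : (fun g : G => φ ψ ⟨b g, hmem g⟩ * ((χ₂ g)⁻¹ : 𝕜ˣ)) ∈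
        coboundaries₁ (Rep.of (charRep (χ₁ * χ₂⁻¹))) := by
      exact (H1π_eq_zero_iff _).mp hψ
    obtain ⟨x, hx⟩ := h0
    let y : 𝕜 := x
    have hx' : ∀ g : G, ((χ₁ * χ₂⁻¹) g : 𝕜) * y - y = φ ψ ⟨b g, hmem g⟩ * ((χ₂ g)⁻¹ : 𝕜ˣ) :=
      fun g => congrFun hx g
    -- evaluate at s
    have hxs := hx' s
    have hbs' : (⟨b s, hmem s⟩ : ↥B) = 0 := Subtype.ext hbs
    rw [hbs', map_zero, zero_mul] at hxs
    have hx0 : y = 0 := by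
      have hne : ((χ₁ * χ₂⁻¹) s : 𝕜) ≠ 1 := by
        intro hcon
        have : (χ₁ s : 𝕜) = χ₂ s := by
          have h1 : (χ₁ s : 𝕜) * ((χ₂ s)⁻¹ : 𝕜ˣ) = 1 := hcon
          have h2 : ((χ₂ s)⁻¹ : 𝕜ˣ) * (χ₂ s : 𝕜) = 1 := by
            rw [mul_comm]; exact_mod_cast (χ₂ s).mul_inv
          calc (χ₁ s : 𝕜) = (χ₁ s : 𝕜) * (((χ₂ s)⁻¹ : 𝕜ˣ) * (χ₂ s : 𝕜)) := by rw [h2, mul_one]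
            _ = ((χ₁ s : 𝕜) * ((χ₂ s)⁻¹ : 𝕜ˣ)) * (χ₂ s : 𝕜) := by ring
            _ = χ₂ s := by rw [h1, one_mul]
        have hu : IsUnit (residue A (a s - d s)) := (hunit.map (residue A))
        rw [map_sub, ← hχ₁, ← hχ₂, this, sub_self] at hu
        exact not_isUnit_zero hu
      have := sub_eq_zero.mp hxs
      rcases mul_eq_zero.mp (by linear_combination this : (((χ₁ * χ₂⁻¹) s : 𝕜) - 1) * y = 0) with h | h
      · exact absurd (by linear_combination h) hne
      · exact h
    have hφ0 : ∀ g : G, φ ψ ⟨b g, hmem g⟩ = 0 := by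
      intro g
      have h := hx' g
      rw [hx0, mul_zero, zero_sub, neg_zero] at h
      have hne : ((((χ₂ g)⁻¹ : 𝕜ˣ)) : 𝕜) ≠ 0 := Units.ne_zero _
      rcases mul_eq_zero.mp h.symm with h' | h'
      · exact h'
      · exact absurd h' hne
    -- ψ vanishes on all of V
    refine LinearMap.ext fun v => ?_
    obtain ⟨⟨z, hz⟩, rfl⟩ := Submodule.mkQ_surjective _ v
    show φ ψ ⟨z, hz⟩ = (0 : Module.Dual 𝕜 V) _
    rw [LinearMap.zero_apply]
    have key : ∀ z ∈ B, ∀ hz : z ∈ B, φ ψ ⟨z, hz⟩ = 0 := by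
      intro z hzmem
      refine Submodule.span_induction (p := fun y _ => ∀ hy : y ∈ B, φ ψ ⟨y, hy⟩ = 0)
        ?_ ?_ ?_ ?_ hzmem
      · rintro w ⟨g, rfl⟩ hw; exact hφ0 g
      · intro hy; rw [show (⟨0, hy⟩ : ↥B) = 0 from rfl, map_zero]
      · intro y w hy hw hy' hw' hyw
        have : (⟨y + w, hyw⟩ : ↥B) = ⟨y, hy⟩ + ⟨w, hw⟩ := rfl
        rw [this, map_add, hy' hy, hw' hw, add_zero]
      · intro r y hy hy' hry
        have : (⟨r • y, hry⟩ : ↥B) = r • ⟨y, hy⟩ := rfl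
        rw [this, map_smul, hy' hy, smul_zero]
    exact key z hz hz
  -- dimension count
  haveI : Module.Finite 𝕜 W := FiniteDimensional.of_finrank_eq_succ hdim
  have hdual : Module.finrank 𝕜 (Module.Dual 𝕜 V) ≤ 1 := by
    rw [← hdim]
    exact LinearMap.finrank_le_finrank_of_injective hinj
  haveI : Module.Finite A ↥B := Module.Finite.iff_fg.mpr (IsNoetherian.noetherian B)
  haveI : Module.Finite A V := Module.Finite.quotient A _
  haveI : Module.Finite 𝕜 V := Module.Finite.of_restrictScalars_finite A 𝕜 V
  have hVrank : Module.finrank 𝕜 V ≤ 1 := by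
    rw [← Subspace.dual_finrank_eq]
    exact hdual
  obtain ⟨v, hv⟩ := Module.finrank_le_one_iff_top_isPrincipal.mp hVrank
  obtain ⟨x₀, rfl⟩ := Submodule.mkQ_surjective _ v
  refine ⟨(x₀ : A), ?_⟩
  have hle : B ≤ Ideal.span {(x₀ : A)} ⊔ 𝔪 • B := by
    intro z hz
    have hzV : Submodule.mkQ (𝔪 • ⊤ : Submodule A ↥B) ⟨z, hz⟩ ∈ (⊤ : Submodule 𝕜 V) := trivial
    rw [hv] at hzV
    obtain ⟨c, hc⟩ := Submodule.mem_span_singleton.mp hzV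
    obtain ⟨r, rfl⟩ := Ideal.Quotient.mk_surjective c
    have hc' : Submodule.mkQ (𝔪 • ⊤ : Submodule A ↥B) (r • x₀) =
        Submodule.mkQ (𝔪 • ⊤ : Submodule A ↥B) ⟨z, hz⟩ := by
      rw [← hc]; rfl
    have hmemN : (⟨z, hz⟩ : ↥B) - r • x₀ ∈ (𝔪 • ⊤ : Submodule A ↥B) := by
      rw [← Submodule.Quotient.eq]
      exact hc'.symm
    have hmap : z - r * (x₀ : A) ∈ 𝔪 • B := by
      have := Submodule.mem_map_of_mem (f := B.subtype) hmemN
      rw [Submodule.map_smul'', Submodule.map_top, Submodule.range_subtype] at this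
      exact this
    have : z = (z - r * (x₀ : A)) + r * (x₀ : A) := by ring
    rw [this]
    exact Submodule.add_mem _ (Submodule.mem_sup_right hmap)
      (Submodule.mem_sup_left (Ideal.mem_span_singleton'.mpr ⟨r, rfl⟩))
  have hjac : 𝔪 ≤ (⊥ : Ideal A).jacobson := by
    rw [IsLocalRing.jacobson_eq_maximalIdeal ⊥ bot_ne_top]
  have hfin : B.FG := IsNoetherian.noetherian B
  have := Submodule.le_of_le_smul_of_le_jacobson_bot hfin hjac hle
  exact le_antisymm this
    ((Ideal.span_singleton_le_iff_mem _).mpr x₀.2)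

lemma dvr_part {A : Type u} [CommRing A] [IsNoetherianRing A] [IsLocalRing A]
    (hprin : (maximalIdeal A).IsPrincipal)
    (p : ℕ) (hp : 0 < p) (hcharp : CharP (ResidueField A) p)
    (B₀ : Type u) [CommRing B₀] [Nontrivial B₀] [CharZero B₀]
    (f : A →+* B₀) :
    IsDomain A ∧ IsPrincipalIdealRing A ∧ ¬ IsField A := by
  classical
  obtain ⟨t, ht⟩ := hprin
  rw [Ideal.submodule_span_eq] at ht
  have hpA : (p : A) ∈ maximalIdeal A := by
    have : (residue A) (p : A) = 0 := by
      rw [map_natCast]; exact CharP.cast_eq_zero _ p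
    exact Ideal.Quotient.eq_zero_iff_mem.mp this
  have hpow : ∀ N : ℕ, ((p : A)) ^ N ≠ 0 := by
    intro N h0
    have h1 : ((p : B₀)) ^ N = 0 := by
      rw [← map_natCast f, ← map_pow, h0, map_zero]
    have h2 : ((p ^ N : ℕ) : B₀) = 0 := by push_cast; exact h1
    have h3 : (p : ℕ) ^ N ≠ 0 := pow_ne_zero _ hp.ne'
    exact h3 (Nat.cast_injective (R := B₀) (by simpa using h2))
  have hpt : ∃ c : A, c * t = (p : A) := by
    rw [ht] at hpA
    exact Ideal.mem_span_singleton'.mp hpA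
  have htpow : ∀ N : ℕ, t ^ N ≠ 0 := by
    intro N h0
    obtain ⟨c, hc⟩ := hpt
    apply hpow N
    rw [← hc, mul_pow, h0, mul_zero]
  have hnotfield : ¬ IsField A := by
    intro hf
    have hbot : maximalIdeal A = ⊥ := IsLocalRing.isField_iff_maximalIdeal_eq.mp hf
    rw [hbot] at hpA
    exact hpow 1 (by simpa using (Ideal.mem_bot.mp hpA))
  have hKrull : (⨅ n : ℕ, maximalIdeal A ^ n) = ⊥ :=
    Ideal.iInf_pow_eq_bot_of_isLocalRing _ (Ideal.IsMaximal.ne_top (maximalIdeal.isMaximal A))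
  have hform : ∀ x : A, x ≠ 0 → ∃ (n : ℕ) (c : A), IsUnit c ∧ x = c * t ^ n := by
    intro x hx
    have hex : ∃ i, x ∉ maximalIdeal A ^ i := by
      by_contra hcon
      push_neg at hcon
      apply hx
      have hxi : x ∈ (⨅ n : ℕ, maximalIdeal A ^ n) := (Submodule.mem_iInf _).mpr hcon
      rw [hKrull] at hxi
      exact Ideal.mem_bot.mp hxi
    have hj : x ∉ maximalIdeal A ^ (Nat.find hex) := Nat.find_spec hex
    have hj0 : Nat.find hex ≠ 0 := by
      intro h
      apply hj
      rw [h, pow_zero, Ideal.one_eq_top]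
      trivial
    obtain ⟨n, hn⟩ : ∃ n, Nat.find hex = n + 1 :=
      ⟨Nat.find hex - 1, (Nat.succ_pred_eq_of_pos (Nat.pos_of_ne_zero hj0)).symm⟩
    have hxn : x ∈ maximalIdeal A ^ n :=
      not_not.mp (Nat.find_min hex (by omega))
    rw [ht, Ideal.span_singleton_pow] at hxn
    obtain ⟨c, hc⟩ := Ideal.mem_span_singleton'.mp hxn
    refine ⟨n, c, ?_, hc.symm⟩
    by_contra hcu
    have hcm : c ∈ maximalIdeal A := (IsLocalRing.mem_maximalIdeal c).mpr hcu
    rw [ht] at hcm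
    obtain ⟨e, he⟩ := Ideal.mem_span_singleton'.mp hcm
    apply hj
    rw [hn, ht, Ideal.span_singleton_pow]
    exact Ideal.mem_span_singleton'.mpr ⟨e, by rw [← hc, ← he]; ring⟩
  haveI : IsDomain A := by
    have : NoZeroDivisors A := by
      constructor
      intro x y hxy
      by_contra hcon
      push_neg at hcon
      obtain ⟨hx, hy⟩ := hcon
      obtain ⟨n, c, hcu, rfl⟩ := hform x hx
      obtain ⟨m, e, heu, rfl⟩ := hform y hy
      have h0 : (c * e) * t ^ (n + m) = 0 := by
        rw [pow_add, ← hxy]; ring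
      exact htpow (n + m) (((hcu.mul heu).mul_right_eq_zero).mp h0)
    exact NoZeroDivisors.to_isDomain A
  have hdvr : IsDiscreteValuationRing A :=
    ((IsDiscreteValuationRing.TFAE A hnotfield).out 0 4).mpr (⟨⟨t, ht⟩⟩ : (maximalIdeal A).IsPrincipal)
  exact ⟨inferInstance, hdvr.toIsPrincipalIdealRing, hnotfield⟩


/-- Let `A` be a noetherian local ring with maximal ideal `m` and residue
field `k`, and `ρ : G → GL₂(A)` with `ρ s` diagonal and `λ₁ - λ₂` a unit.  Suppose the
ideal of reducibility `BC` equals `m`, and let `χ₁, χ₂ : G → kˣ` be the reductions of the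
diagonal entries mod `m`.  If `H¹(G, k(χ₁χ₂⁻¹))` and `H¹(G, k(χ₂χ₁⁻¹))` are one-dimensional
over `k`, then `m` is principal; and if moreover `k` has positive characteristic `p` and
`A` surjects onto a nonzero ring of characteristic zero, then `A` is a discrete valuation
ring (a local principal ideal domain that is not a field). -/
theorem stmt_4 {A G : Type u} [CommRing A] [IsNoetherianRing A] [IsLocalRing A] [Group G]
    (ρ : G →* Matrix (Fin 2) (Fin 2) A)
    (s : G) (h01 : ρ s 0 1 = 0) (h10 : ρ s 1 0 = 0)
    (hunit : IsUnit (ρ s 0 0 - ρ s 1 1))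
    (hBC : Ideal.span (Set.range fun g : G => ρ g 0 1) *
        Ideal.span (Set.range fun g : G => ρ g 1 0) = IsLocalRing.maximalIdeal A)
    (χ₁ χ₂ : G →* (IsLocalRing.ResidueField A)ˣ)
    (hχ₁ : ∀ g : G, (χ₁ g : IsLocalRing.ResidueField A) = IsLocalRing.residue A (ρ g 0 0))
    (hχ₂ : ∀ g : G, (χ₂ g : IsLocalRing.ResidueField A) = IsLocalRing.residue A (ρ g 1 1))
    (hdim1 : Module.finrank (IsLocalRing.ResidueField A)
      (groupCohomology.H1 (Rep.of (charRep (χ₁ * χ₂⁻¹)))) = 1)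
    (hdim2 : Module.finrank (IsLocalRing.ResidueField A)
      (groupCohomology.H1 (Rep.of (charRep (χ₂ * χ₁⁻¹)))) = 1) :
    (IsLocalRing.maximalIdeal A).IsPrincipal ∧
    (∀ p : ℕ, 0 < p → CharP (IsLocalRing.ResidueField A) p →
      ∀ (B₀ : Type u) [CommRing B₀] [Nontrivial B₀] [CharZero B₀],
      ∀ f : A →+* B₀, Function.Surjective f →
      IsDomain A ∧ IsPrincipalIdealRing A ∧ ¬ IsField A) := by
  have hmulB : ∀ g h : G, ρ (g * h) 0 1 = ρ g 0 0 * ρ h 0 1 + ρ g 0 1 * ρ h 1 1 := by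
    intro g h
    rw [map_mul]
    simp [Matrix.mul_apply, Fin.sum_univ_two]
  have hmulC : ∀ g h : G, ρ (g * h) 1 0 = ρ g 1 1 * ρ h 1 0 + ρ g 1 0 * ρ h 0 0 := by
    intro g h
    rw [map_mul]
    simp [Matrix.mul_apply, Fin.sum_univ_two]
    ring
  have hBprin : (Ideal.span (Set.range fun g : G => ρ g 0 1)).IsPrincipal :=
    key_principal (fun g => ρ g 0 0) (fun g => ρ g 0 1) (fun g => ρ g 1 1)
      hmulB s h01 hunit χ₁ χ₂ hχ₁ hχ₂ hdim1
  have hCprin : (Ideal.span (Set.range fun g : G => ρ g 1 0)).IsPrincipal :=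
    key_principal (fun g => ρ g 1 1) (fun g => ρ g 1 0) (fun g => ρ g 0 0)
      hmulC s h10 (by simpa using hunit.neg) χ₂ χ₁ hχ₂ hχ₁ hdim2
  obtain ⟨x, hx⟩ := hBprin
  obtain ⟨y, hy⟩ := hCprin
  rw [Ideal.submodule_span_eq] at hx hy
  have hm : IsLocalRing.maximalIdeal A = Ideal.span {x * y} := by
    rw [← hBC, hx, hy, Ideal.span_singleton_mul_span_singleton]
  refine ⟨⟨⟨x * y, hm⟩⟩, ?_⟩
  intro p hp hcp B₀ _ _ _ f hf
  exact dvr_part ⟨⟨x * y, hm⟩⟩ p hp hcp B₀ f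
end

section
/- Let A be a noetherian local ring whose maximal ideal is principal, let p be a prime number whose image in A lies in the maximal ideal of A, and suppose that A admits a surjective ring homomorphism onto a nonzero ring of characteristic zero. Then A is an integral domain and a discrete valuation ring. -/
/-- Let `A` be a noetherian local ring whose maximal ideal is principal,
let `p` be a prime number whose image in `A` lies in the maximal ideal, and suppose `A`
admits a surjective ring homomorphism onto a nonzero ring of characteristic zero.
Then `A` is an integral domain and a discrete valuation ring (a local principal ideal
domain that is not a field). -/
theorem stmt_6 {A : Type*} [CommRing A] [IsNoetherianRing A] [IsLocalRing A]
    (hprin : (IsLocalRing.maximalIdeal A).IsPrincipal)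
    (p : ℕ) (hp : p.Prime) (hpA : (p : A) ∈ IsLocalRing.maximalIdeal A)
    (B : Type*) [CommRing B] [Nontrivial B] [CharZero B]
    (f : A →+* B) (hf : Function.Surjective f) :
    IsDomain A ∧ IsPrincipalIdealRing A ∧ ¬ IsField A := by
  classical
  obtain ⟨π, hπ⟩ := hprin
  -- powers of p are nonzero in A
  have hpn : ∀ n : ℕ, (p : A) ^ n ≠ 0 := by
    intro n h
    have h1 : (f ((p:A)^n)) = 0 := by rw [h]; simp
    rw [map_pow, map_natCast] at h1
    have h2 : ((p ^ n : ℕ) : B) = 0 := by push_cast; exact h1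
    exact pow_ne_zero n hp.ne_zero (Nat.cast_eq_zero.mp h2)
  -- π is not nilpotent
  have hπnil : ∀ n : ℕ, π ^ n ≠ 0 := by
    intro n h
    rw [hπ, Ideal.submodule_span_eq, Ideal.mem_span_singleton] at hpA
    obtain ⟨c, hc⟩ := hpA
    exact hpn n (by rw [hc, mul_pow, h, zero_mul])
  have hnontriv : Nontrivial A := ⟨(p:A), 0, by simpa using hpn 1⟩
  -- Krull intersection
  have hkrull : (⨅ n : ℕ, IsLocalRing.maximalIdeal A ^ n) = ⊥ :=
    Ideal.iInf_pow_eq_bot_of_isLocalRing _ (Ideal.IsMaximal.ne_top inferInstance)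
  -- every nonzero element is a unit times a power of π
  have key : ∀ x : A, x ≠ 0 → ∃ (n : ℕ) (u : A), IsUnit u ∧ x = u * π ^ n := by
    intro x hx
    have hxnot : ∃ n, x ∉ IsLocalRing.maximalIdeal A ^ n := by
      by_contra h
      push_neg at h
      exact hx (by simpa [hkrull] using Ideal.mem_iInf.mpr h)
    obtain ⟨n, hn, hmin⟩ :
        ∃ n, x ∉ IsLocalRing.maximalIdeal A ^ n ∧
          ∀ m < n, x ∈ IsLocalRing.maximalIdeal A ^ m :=
      ⟨Nat.find hxnot, Nat.find_spec hxnot, fun m hm => not_not.mp (Nat.find_min hxnot hm)⟩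
    have hn1 : 1 ≤ n := by
      rcases Nat.eq_zero_or_pos n with h0 | h
      · exfalso; apply hn; rw [h0]; simp
      · exact h
    have hxin : x ∈ IsLocalRing.maximalIdeal A ^ (n - 1) :=
      hmin (n - 1) (Nat.sub_lt hn1 one_pos)
    rw [hπ, Ideal.submodule_span_eq, Ideal.span_singleton_pow, Ideal.mem_span_singleton] at hxin
    obtain ⟨u, hu⟩ := hxin
    refine ⟨n - 1, u, ?_, by rw [hu, mul_comm]⟩
    by_contra huni
    apply hn
    have humem : u ∈ IsLocalRing.maximalIdeal A := by
      rwa [IsLocalRing.mem_maximalIdeal, mem_nonunits_iff]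
    have hmul : x ∈ IsLocalRing.maximalIdeal A ^ (n - 1) * IsLocalRing.maximalIdeal A := by
      rw [hu]
      exact Ideal.mul_mem_mul (by
        rw [hπ, Ideal.submodule_span_eq, Ideal.span_singleton_pow,
          Ideal.mem_span_singleton]) humem
    rwa [← pow_succ, Nat.sub_add_cancel hn1] at hmul
  have hnzd : NoZeroDivisors A := by
    refine ⟨fun {x y} hxy => ?_⟩
    by_contra h
    push_neg at h
    obtain ⟨hx, hy⟩ := h
    obtain ⟨n, u, hu, rfl⟩ := key x hx
    obtain ⟨m, v, hv, rfl⟩ := key y hy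
    have h1 : (u * v) * π ^ (n + m) = 0 := by rw [pow_add, ← hxy]; ring
    have h2 : π ^ (n + m) = 0 := by
      obtain ⟨w, hw⟩ := hu.mul hv
      calc π ^ (n+m) = (↑w⁻¹ * ↑w) * π ^ (n+m) := by simp
        _ = ↑w⁻¹ * ((u*v) * π ^ (n+m)) := by rw [hw]; ring
        _ = 0 := by rw [h1, mul_zero]
    exact hπnil _ h2
  have hdom : IsDomain A := NoZeroDivisors.to_isDomain A
  -- not a field: maximal ideal nonzero
  have hnf : ¬ IsField A := by
    intro hfield
    have hb : IsLocalRing.maximalIdeal A = ⊥ :=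
      IsLocalRing.isField_iff_maximalIdeal_eq.mp hfield
    rw [hb] at hpA
    exact hpn 1 (by simpa using hpA)
  have hdvr : IsDiscreteValuationRing A := by
    have hpr : (IsLocalRing.maximalIdeal A).IsPrincipal := ⟨π, hπ⟩
    exact ((IsDiscreteValuationRing.TFAE A hnf).out 4 0).mp hpr
  exact ⟨hdom, hdvr.toIsPrincipalIdealRing, hnf⟩
end

section
/- Let p be a prime, let R be a noetherian local ring with maximal ideal m whose residue field R/m is isomorphic to 𝔽_p = ℤ/pℤ, and let I be a proper ideal of R. Then I is maximal (i.e. I = m) if and only if there exists neither a surjective ring homomorphism R/I → 𝔽_p[x]/(x²) nor a surjective ring homomorphism R/I → ℤ/p²ℤ. -/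
open IsLocalRing Ideal Polynomial

theorem aux_exists_surj {R : Type*} [CommRing R] [IsNoetherianRing R] [IsLocalRing R]
    (p : ℕ) (hp : p.Prime)
    (e : (R ⧸ IsLocalRing.maximalIdeal R) ≃+* ZMod p)
    (I : Ideal R) (hI : I ≠ ⊤) (hIm : I ≠ IsLocalRing.maximalIdeal R) :
    (∃ f : R ⧸ I →+*
        (Polynomial (ZMod p) ⧸ (Ideal.span {(Polynomial.X : Polynomial (ZMod p)) ^ 2})),
      Function.Surjective f) ∨
    (∃ f : R ⧸ I →+* ZMod (p ^ 2), Function.Surjective f) := by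
  haveI := Fact.mk hp
  set m := IsLocalRing.maximalIdeal R with hm
  have hIle : I ≤ m := le_maximalIdeal hI
  -- residue decomposition
  have hq : ∀ a : R, ∃ c : ℤ, a - (c : R) ∈ m := by
    intro a
    obtain ⟨c, hc⟩ := ZMod.intCast_surjective (e (Ideal.Quotient.mk m a))
    refine ⟨c, ?_⟩
    have h1 : e (Ideal.Quotient.mk m (a - (c:R))) = 0 := by
      rw [map_sub, map_sub, map_intCast, map_intCast, hc, sub_self]
    have h0 : Ideal.Quotient.mk m (a - (c:R)) = 0 := by
      apply e.injective; rw [h1, map_zero]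
    exact (Ideal.Quotient.eq_zero_iff_mem).mp h0
  have hpm : (p : R) ∈ m := by
    have h1 : e (Ideal.Quotient.mk m (p : R)) = 0 := by
      rw [map_natCast, map_natCast, ZMod.natCast_self]
    have h0 : Ideal.Quotient.mk m (p : R) = 0 := by
      apply e.injective; rw [h1, map_zero]
    exact (Ideal.Quotient.eq_zero_iff_mem).mp h0
  -- int cast in m implies p divides
  have hcm : ∀ c : ℤ, (c : R) ∈ m → (p : ℤ) ∣ c := by
    intro c hc
    have h1 : e (Ideal.Quotient.mk m (c : R)) = (c : ZMod p) := by
      rw [map_intCast, map_intCast]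
    have h0 : Ideal.Quotient.mk m ((c : R)) = 0 := (Ideal.Quotient.eq_zero_iff_mem).mpr hc
    rw [h0, map_zero] at h1
    exact (ZMod.intCast_zmod_eq_zero_iff_dvd c p).mp h1.symm
  -- Nakayama: m ≠ I ⊔ m^2
  have hnak : ¬ m ≤ I ⊔ m ^ 2 := by
    intro hle
    set N : Ideal (R ⧸ I) := m.map (Ideal.Quotient.mk I) with hN
    have hfg : N.FG := IsNoetherian.noetherian N
    have hNle : N ≤ N • N := by
      calc N ≤ (I ⊔ m ^ 2).map (Ideal.Quotient.mk I) := Ideal.map_mono hle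
        _ = N ^ 2 := by
          rw [Ideal.map_sup, Ideal.map_quotient_self, Ideal.map_pow, bot_sup_eq]
        _ = N • N := by rw [Ideal.smul_eq_mul, pow_two]
    have hjac : N ≤ Ideal.jacobson ⊥ := by
      rw [Ideal.jacobson]
      refine le_sInf ?_
      rintro K ⟨-, hK⟩
      haveI := hK
      have hcomap := Ideal.comap_isMaximal_of_surjective (Ideal.Quotient.mk I)
        Ideal.Quotient.mk_surjective (K := K)
      have := IsLocalRing.eq_maximalIdeal hcomap
      rw [Ideal.map_le_iff_le_comap, this]
    have hbot : N = ⊥ := Submodule.eq_bot_of_le_smul_of_le_jacobson_bot N N hfg hNle hjac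
    have : m ≤ I := by
      rw [hN, Ideal.map_eq_bot_iff_le_ker, Ideal.mk_ker] at hbot
      exact hbot
    exact hIm (le_antisymm hIle this)
  obtain ⟨t, htm, htJ0⟩ : ∃ t, t ∈ m ∧ t ∉ I ⊔ m ^ 2 := by
    by_contra h
    push_neg at h
    exact hnak fun x hx => h x hx
  -- maximal J
  have hnoeth := (set_has_maximal_iff_noetherian.mpr (inferInstance : IsNoetherianRing R))
  obtain ⟨J, ⟨hJ1, hJ2, hJ3⟩, hJmax⟩ :=
    hnoeth {J : Ideal R | I ⊔ m ^ 2 ≤ J ∧ J ≤ m ∧ t ∉ J}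
      ⟨I ⊔ m ^ 2, le_refl _, sup_le hIle (Ideal.pow_le_self two_ne_zero), htJ0⟩
  have hm2J : m ^ 2 ≤ J := le_trans le_sup_right hJ1
  have hIJ : I ≤ J := le_trans le_sup_left hJ1
  have hmul : ∀ x ∈ m, ∀ y ∈ m, x * y ∈ J := by
    intro x hx y hy
    apply hm2J
    rw [pow_two]
    exact Ideal.mul_mem_mul hx hy
  have hJne : J ≠ ⊤ :=
    fun h => (IsLocalRing.maximalIdeal.isMaximal R).ne_top (top_le_iff.mp (h ▸ hJ2))
  -- inverses mod p
  have hinv : ∀ u : ℤ, ¬ (p:ℤ) ∣ u → ∃ v k : ℤ, v * u - 1 = p * k := by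
    intro u hu
    have h0 : (u : ZMod p) ≠ 0 := fun h => hu ((ZMod.intCast_zmod_eq_zero_iff_dvd u p).mp h)
    obtain ⟨v, hv⟩ := ZMod.intCast_surjective ((u : ZMod p)⁻¹)
    have : ((v * u - 1 : ℤ) : ZMod p) = 0 := by
      push_cast
      rw [hv, inv_mul_cancel₀ h0, sub_self]
    obtain ⟨k, hk⟩ := (ZMod.intCast_zmod_eq_zero_iff_dvd _ p).mp this
    exact ⟨v, k, hk⟩
  -- cancel units mod p
  have hunit : ∀ (u : ℤ) (x : R), x ∈ m → ¬ (p:ℤ) ∣ u → (u : R) * x ∈ J → x ∈ J := by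
    intro u x hx hu hux
    obtain ⟨v, k, hk⟩ := hinv u hu
    have hk' : (v : R) * (u : R) - 1 = (p : R) * (k : R) := by exact_mod_cast congrArg (Int.cast : ℤ → R) hk
    have hx' : x = (v : R) * ((u : R) * x) - (k : R) * ((p : R) * x) := by
      linear_combination (-x) * hk'
    rw [hx']
    exact J.sub_mem (Ideal.mul_mem_left J _ hux) (Ideal.mul_mem_left J _ (hmul _ hpm _ hx))
  -- key: for x ∈ m \ J, t is a unit multiple of x mod J
  have hkey : ∀ x, x ∈ m → x ∉ J → ∃ c : ℤ, ¬ (p:ℤ) ∣ c ∧ t - (c : R) * x ∈ J := by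
    intro x hx hxJ
    have hmem : t ∈ J ⊔ Ideal.span {x} := by
      by_contra ht
      refine hJmax (J ⊔ Ideal.span {x}) ⟨le_trans hJ1 le_sup_left,
        sup_le hJ2 ((Ideal.span_le).mpr (by simpa using hx)), ht⟩ ?_
      refine lt_of_le_of_ne le_sup_left ?_
      intro hEq
      exact hxJ (hEq ▸ (le_sup_right : Ideal.span {x} ≤ J ⊔ Ideal.span {x})
        (Ideal.mem_span_singleton_self x))
    obtain ⟨j, hj, y, hy, hjy⟩ := Submodule.mem_sup.mp hmem
    obtain ⟨a, rfl⟩ := Ideal.mem_span_singleton'.mp hy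
    obtain ⟨c, hc⟩ := hq a
    refine ⟨c, ?_, ?_⟩
    · intro hdvd
      obtain ⟨c', rfl⟩ := hdvd
      apply hJ3
      have h1 : (a - (((p:ℤ) * c' : ℤ) : R)) * x ∈ J := hmul _ hc _ hx
      have h2 : (c' : R) * ((p : R) * x) ∈ J := Ideal.mul_mem_left J _ (hmul _ hpm _ hx)
      have ht' : t = j + (a - (((p:ℤ) * c' : ℤ) : R)) * x + (c' : R) * ((p:R) * x) := by
        push_cast
        linear_combination -hjy
      rw [ht']
      exact J.add_mem (J.add_mem hj h1) h2
    · have h1 : (a - (c:R)) * x ∈ J := hmul _ hc _ hx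
      have ht' : t - (c : R) * x = j + (a - (c:R)) * x := by linear_combination -hjy
      rw [ht']
      exact J.add_mem hj h1
  -- every element of m is an integer multiple of t mod J
  have hrep : ∀ x, x ∈ m → ∃ d : ℤ, x - (d : R) * t ∈ J := by
    intro x hx
    by_cases hxJ : x ∈ J
    · exact ⟨0, by simpa using hxJ⟩
    · obtain ⟨c, hc, hct⟩ := hkey x hx hxJ
      obtain ⟨v, k, hk⟩ := hinv c hc
      have hk' : (v : R) * (c : R) - 1 = (p : R) * (k : R) := by
        exact_mod_cast congrArg (Int.cast : ℤ → R) hk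
      refine ⟨v, ?_⟩
      have hx' : x - (v : R) * t = (-(v:R)) * (t - (c:R) * x) - (k : R) * ((p : R) * x) := by
        linear_combination (-x) * hk'
      rw [hx']
      exact J.sub_mem (Ideal.mul_mem_left J _ hct) (Ideal.mul_mem_left J _ (hmul _ hpm _ hx))
  -- full representation
  have hBrep : ∀ a : R, ∃ c d : ℤ, a - ((c : R) + (d : R) * t) ∈ J := by
    intro a
    obtain ⟨c, hc⟩ := hq a
    obtain ⟨d, hd⟩ := hrep _ hc
    exact ⟨c, d, by have := hd; rw [show a - ((c:R) + (d:R)*t) = (a - (c:R)) - (d:R)*t by ring]; exact this⟩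
  -- independence: constant term
  have hconst : ∀ c d : ℤ, (c : R) + (d : R) * t ∈ J → (p : ℤ) ∣ c := by
    intro c d h
    apply hcm
    have : (c : R) = ((c:R) + (d:R)*t) - (d:R)*t := by ring
    rw [this]
    exact Submodule.sub_mem m (hJ2 h) (m.mul_mem_left _ htm)
  have hJle : ∀ x, x ∈ J → Ideal.Quotient.mk J x = 0 := fun x hx =>
    (Ideal.Quotient.eq_zero_iff_mem).mpr hx
  haveI hBnt : Nontrivial (R ⧸ J) := Ideal.Quotient.nontrivial_iff.mpr hJne
  by_cases hpJ : (p : R) ∈ J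
  · -- characteristic p case : target 𝔽_p[x]/(x²)
    left
    have hcast : ∀ c : ℤ, ((c : ℤ) : R ⧸ J) = Ideal.Quotient.mk J ((c : ℤ) : R) := by
      intro c; rw [map_intCast]
    haveI hcharp : CharP (R ⧸ J) p := by
      constructor
      intro n
      rw [show ((n : ℕ) : R ⧸ J) = Ideal.Quotient.mk J ((n : ℕ) : R) by rfl]
      rw [Ideal.Quotient.eq_zero_iff_mem]
      constructor
      · intro hn
        have h1 : (p : ℤ) ∣ (n : ℤ) := hconst n 0 (by push_cast; simpa using hn)
        exact_mod_cast h1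
      · rintro ⟨k, rfl⟩
        push_cast
        rw [show ((p : R) * (k : R)) = (k : R) * (p : R) by ring]
        exact Ideal.mul_mem_left J _ hpJ
    letI : Algebra (ZMod p) (R ⧸ J) := ZMod.algebra _ p
    set sp : Ideal (Polynomial (ZMod p)) := Ideal.span {(X : Polynomial (ZMod p)) ^ 2} with hsp
    set ψ0 : Polynomial (ZMod p) →ₐ[ZMod p] (R ⧸ J) := aeval (Ideal.Quotient.mk J t) with hψ0
    have htsq : (Ideal.Quotient.mk J t) ^ 2 = 0 := by
      rw [← map_pow, Ideal.Quotient.eq_zero_iff_mem, pow_two]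
      exact hmul _ htm _ htm
    have hker : ∀ q ∈ sp, ψ0.toRingHom q = 0 := by
      intro q hq
      obtain ⟨r, rfl⟩ := Ideal.mem_span_singleton'.mp hq
      show (aeval (Ideal.Quotient.mk J t)) (r * X ^ 2) = 0
      rw [_root_.map_mul, map_pow, aeval_X, htsq, mul_zero]
    set ψ : (Polynomial (ZMod p) ⧸ sp) →+* (R ⧸ J) := Ideal.Quotient.lift sp ψ0.toRingHom hker
      with hψdef
    have hψmk : ∀ q, ψ (Ideal.Quotient.mk sp q) = ψ0 q := fun q =>
      Ideal.Quotient.lift_mk sp ψ0.toRingHom hker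
    have hψeval : ∀ c d : ℤ, ψ0 (C ((c : ℤ) : ZMod p) + C ((d : ℤ) : ZMod p) * X)
        = Ideal.Quotient.mk J ((c : R) + (d : R) * t) := by
      intro c d
      rw [map_add, _root_.map_mul, hψ0, aeval_C, aeval_C, aeval_X, map_intCast, map_intCast]
      rw [map_add, _root_.map_mul, map_intCast, map_intCast]
    have hinj : Function.Injective ψ := by
      rw [injective_iff_map_eq_zero]
      intro x hx
      obtain ⟨q, rfl⟩ := Ideal.Quotient.mk_surjective x
      rw [hψmk] at hx
      have hdvd : (X : Polynomial (ZMod p)) ^ 2 ∣ q - (C (q.coeff 0) + C (q.coeff 1) * X) := by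
        rw [X_pow_dvd_iff]
        intro d hd
        interval_cases d <;>
          simp [coeff_add, coeff_C, coeff_C_mul, coeff_X]
      obtain ⟨r, hr⟩ := hdvd
      have hq' : q = (C (q.coeff 0) + C (q.coeff 1) * X) + X ^ 2 * r := by
        rw [← hr]; ring
      have h0 : ψ0 (C (q.coeff 0) + C (q.coeff 1) * X) = 0 := by
        have := hx
        rw [hq', map_add, _root_.map_mul, map_pow, aeval_X, htsq, zero_mul, add_zero] at this
        exact this
      obtain ⟨c, hc⟩ := ZMod.intCast_surjective (q.coeff 0)
      obtain ⟨d, hd⟩ := ZMod.intCast_surjective (q.coeff 1)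
      rw [← hc, ← hd, hψeval, Ideal.Quotient.eq_zero_iff_mem] at h0
      have hpc : (p : ℤ) ∣ c := hconst c d h0
      have hcJ : ((c : ℤ) : R) ∈ J := by
        obtain ⟨c', rfl⟩ := hpc
        push_cast
        rw [show ((p : R) * (c' : R)) = (c' : R) * (p : R) by ring]
        exact Ideal.mul_mem_left J _ hpJ
      have hdt : (d : R) * t ∈ J := by
        have : (d : R) * t = ((c : R) + (d : R) * t) - (c : R) := by ring
        rw [this]
        exact J.sub_mem h0 hcJ
      have hpd : (p : ℤ) ∣ d := by
        by_contra hnd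
        exact hJ3 (hunit d t htm hnd hdt)
      have hc0 : q.coeff 0 = 0 := by
        rw [← hc]; exact (ZMod.intCast_zmod_eq_zero_iff_dvd c p).mpr hpc
      have hd0 : q.coeff 1 = 0 := by
        rw [← hd]; exact (ZMod.intCast_zmod_eq_zero_iff_dvd d p).mpr hpd
      rw [Ideal.Quotient.eq_zero_iff_mem, hq', hc0, hd0]
      simp only [map_zero, zero_add, zero_mul, add_zero]
      rw [hsp]
      exact Ideal.mem_span_singleton'.mpr ⟨r, by ring⟩
    have hsurj : Function.Surjective ψ := by
      intro b
      obtain ⟨a, rfl⟩ := Ideal.Quotient.mk_surjective b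
      obtain ⟨c, d, hcd⟩ := hBrep a
      refine ⟨Ideal.Quotient.mk sp (C ((c : ℤ) : ZMod p) + C ((d : ℤ) : ZMod p) * X), ?_⟩
      rw [hψmk, hψeval]
      exact ((Ideal.Quotient.mk_eq_mk_iff_sub_mem _ _).mpr hcd).symm
    set ψe := RingEquiv.ofBijective ψ ⟨hinj, hsurj⟩ with hψe
    refine ⟨(ψe.symm.toRingHom.comp (Ideal.Quotient.factor hIJ)), ?_⟩
    apply Function.Surjective.comp ψe.symm.surjective
    intro b
    obtain ⟨a, rfl⟩ := Ideal.Quotient.mk_surjective b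
    exact ⟨Ideal.Quotient.mk I a, Ideal.Quotient.factor_mk hIJ a⟩
  · -- characteristic p² case : target ℤ/p²
    right
    -- t is a unit multiple of p mod J
    obtain ⟨c₀, hc₀, hc₀t⟩ := hkey (p : R) hpm hpJ
    haveI hchar : CharP (R ⧸ J) (p ^ 2) := by
      constructor
      intro n
      rw [show ((n : ℕ) : R ⧸ J) = Ideal.Quotient.mk J ((n : ℕ) : R) by rfl]
      rw [Ideal.Quotient.eq_zero_iff_mem]
      constructor
      · intro hn
        have h1 : (p : ℤ) ∣ (n : ℤ) := hconst n 0 (by push_cast; simpa using hn)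
        obtain ⟨n', hn'⟩ := h1
        have hn'' : ((n' : R) * (p : R)) ∈ J := by
          have : ((n : ℤ) : R) ∈ J := by exact_mod_cast hn
          rw [hn'] at this
          push_cast at this
          rwa [mul_comm] at this
        have h2 : (p:ℤ) ∣ n' := by
          by_contra hnd
          exact hpJ (hunit n' (p : R) hpm hnd hn'')
        obtain ⟨n'', hn''2⟩ := h2
        have hd2 : ((p^2 : ℕ) : ℤ) ∣ (n : ℤ) := ⟨n'', by rw [hn', hn''2]; push_cast; ring⟩
        exact_mod_cast hd2
      · rintro ⟨k, rfl⟩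
        push_cast
        rw [show ((p:R)^2 * (k:R)) = ((k : R)) * ((p:R) * (p:R)) by ring]
        exact Ideal.mul_mem_left J _ (hmul _ hpm _ hpm)
    haveI : NeZero (p ^ 2) := ⟨pow_ne_zero _ hp.ne_zero⟩
    set φ : ZMod (p ^ 2) →+* R ⧸ J := ZMod.castHom dvd_rfl (R ⧸ J) with hφ
    have hinj : Function.Injective φ := by
      rw [injective_iff_map_eq_zero]
      intro x hx
      obtain ⟨c, rfl⟩ := ZMod.intCast_surjective x
      rw [map_intCast] at hx
      rw [ZMod.intCast_zmod_eq_zero_iff_dvd]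
      exact_mod_cast (CharP.intCast_eq_zero_iff (R ⧸ J) (p ^ 2) c).mp hx
    have hsurj : Function.Surjective φ := by
      intro b
      obtain ⟨a, rfl⟩ := Ideal.Quotient.mk_surjective b
      obtain ⟨c, d, hcd⟩ := hBrep a
      refine ⟨((c + d * c₀ * p : ℤ) : ZMod (p ^ 2)), ?_⟩
      rw [map_intCast]
      have hmem : a - ((c + d * c₀ * p : ℤ) : R) ∈ J := by
        have h1 : (d : R) * (t - (c₀ : R) * (p : R)) ∈ J := Ideal.mul_mem_left J _ hc₀t
        have : a - ((c + d * c₀ * p : ℤ) : R)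
            = (a - ((c : R) + (d : R) * t)) + (d : R) * (t - (c₀ : R) * (p : R)) := by
          push_cast
          ring
        rw [this]
        exact J.add_mem hcd h1
      have := (Ideal.Quotient.mk_eq_mk_iff_sub_mem a (((c + d * c₀ * p : ℤ) : R))).mpr hmem
      rw [this]
      rfl
    set ψ := RingEquiv.ofBijective φ ⟨hinj, hsurj⟩ with hψ
    refine ⟨(ψ.symm.toRingHom.comp (Ideal.Quotient.factor hIJ)), ?_⟩
    apply Function.Surjective.comp ψ.symm.surjective
    intro b
    obtain ⟨a, rfl⟩ := Ideal.Quotient.mk_surjective b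
    exact ⟨Ideal.Quotient.mk I a, Ideal.Quotient.factor_mk hIJ a⟩

/-- Let `p` be prime, `R` a noetherian local ring with residue field
`R/m ≅ 𝔽_p`, and `I` a proper ideal of `R`.  Then `I` is maximal (i.e. `I = m`) if and
only if there exists neither a surjective ring homomorphism `R/I → 𝔽_p[x]/(x²)` nor a
surjective ring homomorphism `R/I → ℤ/p²ℤ`. -/
theorem stmt_7 {R : Type*} [CommRing R] [IsNoetherianRing R] [IsLocalRing R]
    (p : ℕ) (hp : p.Prime)
    (e : (R ⧸ IsLocalRing.maximalIdeal R) ≃+* ZMod p)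
    (I : Ideal R) (hI : I ≠ ⊤) :
    I = IsLocalRing.maximalIdeal R ↔
      (¬ ∃ f : R ⧸ I →+*
          (Polynomial (ZMod p) ⧸ (Ideal.span {(Polynomial.X : Polynomial (ZMod p)) ^ 2})),
        Function.Surjective f) ∧
      (¬ ∃ f : R ⧸ I →+* ZMod (p ^ 2), Function.Surjective f) := by
  haveI := Fact.mk hp
  constructor
  · intro h
    subst h
    constructor
    · rintro ⟨f, hf⟩
      haveI : Nontrivial (Polynomial (ZMod p) ⧸
          (Ideal.span {(Polynomial.X : Polynomial (ZMod p)) ^ 2})) := by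
        apply Ideal.Quotient.nontrivial_iff.mpr
        rw [Ne, Ideal.span_singleton_eq_top]
        intro hu
        exact Polynomial.not_isUnit_X (R := ZMod p) (isUnit_of_mul_isUnit_left (by
          rwa [← pow_two]))
      set z := Ideal.Quotient.mk (Ideal.span {(Polynomial.X : Polynomial (ZMod p)) ^ 2})
        (Polynomial.X : Polynomial (ZMod p)) with hz
      have hz0 : z ≠ 0 := by
        rw [hz, Ne, Ideal.Quotient.eq_zero_iff_mem, Ideal.mem_span_singleton]
        intro hdvd
        have := (Polynomial.X_pow_dvd_iff.mp hdvd) 1 one_lt_two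
        simp [Polynomial.coeff_X] at this
      have hz2 : z ^ 2 = 0 := by
        rw [hz, ← map_pow, Ideal.Quotient.eq_zero_iff_mem]
        exact Ideal.mem_span_singleton_self _
      obtain ⟨a, ha⟩ := hf z
      obtain ⟨r, rfl⟩ := Ideal.Quotient.mk_surjective a
      by_cases hr : r ∈ IsLocalRing.maximalIdeal R
      · rw [Ideal.Quotient.eq_zero_iff_mem.mpr hr, map_zero] at ha
        exact hz0 ha.symm
      · have hu : IsUnit r := by
          by_contra h
          exact hr (IsLocalRing.mem_maximalIdeal r |>.mpr h)
        have hu2 : IsUnit z := ha ▸ hu.map (f.comp (Ideal.Quotient.mk _))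
        have h0 : IsUnit (z ^ 2) := hu2.pow 2
        rw [hz2] at h0
        exact not_isUnit_zero h0
    · rintro ⟨f, hf⟩
      haveI : NeZero (p ^ 2) := ⟨pow_ne_zero _ hp.ne_zero⟩
      haveI : Fact (1 < p ^ 2) := ⟨Nat.one_lt_pow two_ne_zero hp.one_lt⟩
      set z : ZMod (p ^ 2) := (p : ZMod (p ^ 2)) with hz
      have hz0 : z ≠ 0 := by
        rw [hz, Ne, ZMod.natCast_eq_zero_iff]
        intro hdvd
        have h1 := Nat.le_of_dvd hp.pos hdvd
        nlinarith [hp.one_lt]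
      have hz2 : z ^ 2 = 0 := by
        rw [hz, ← Nat.cast_pow, ZMod.natCast_self]
      obtain ⟨a, ha⟩ := hf z
      obtain ⟨r, rfl⟩ := Ideal.Quotient.mk_surjective a
      by_cases hr : r ∈ IsLocalRing.maximalIdeal R
      · rw [Ideal.Quotient.eq_zero_iff_mem.mpr hr, map_zero] at ha
        exact hz0 ha.symm
      · have hu : IsUnit r := by
          by_contra h
          exact hr (IsLocalRing.mem_maximalIdeal r |>.mpr h)
        have hu2 : IsUnit z := ha ▸ hu.map (f.comp (Ideal.Quotient.mk _))
        have h0 : IsUnit (z ^ 2) := hu2.pow 2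
        rw [hz2] at h0
        exact not_isUnit_zero h0
  · rintro ⟨h1, h2⟩
    by_contra hIm
    rcases aux_exists_surj p hp e I hI hIm with h | h
    exacts [h1 h, h2 h]
end

section
/- Let p be a prime and n ≥ 2 an integer. Let R be a discrete valuation ring that is complete with respect to its maximal-ideal-adic topology, and suppose there exists a surjective ring homomorphism R → ℤ/pⁿℤ. Then R is isomorphic as a ring to the ring ℤ_p of p-adic integers. (Equivalently: the only complete discrete valuation ring admitting a surjection onto ℤ/pⁿℤ for some n ≥ 2 is ℤ_p.) -/
open IsLocalRing Ideal

/-- Let `p` be prime and `n ≥ 2`.  Let `R` be a discrete valuation ring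
which is complete with respect to its maximal-ideal-adic topology, and suppose there is a
surjective ring homomorphism `R → ℤ/pⁿℤ`.  Then `R` is isomorphic, as a ring, to the ring
`ℤ_p` of `p`-adic integers. -/
theorem stmt_8 (p : ℕ) [Fact p.Prime] (n : ℕ) (hn : 2 ≤ n)
    {R : Type*} [CommRing R] [IsDomain R] [IsDiscreteValuationRing R]
    [IsAdicComplete (IsLocalRing.maximalIdeal R) R]
    (f : R →+* ZMod (p ^ n)) (hf : Function.Surjective f) :
    Nonempty (R ≃+* ℤ_[p]) := by
  have hp : p.Prime := Fact.out
  haveI : NeZero (p ^ n) := ⟨pow_ne_zero n hp.ne_zero⟩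
  haveI : Fact (1 < p ^ n) := ⟨one_lt_pow' hp.one_lt (by omega)⟩
  haveI hlf : IsLocalHom f := IsLocalHom.of_surjective f hf
  -- kernel inside maximal ideal
  have hker : RingHom.ker f ≤ maximalIdeal R := by
    apply IsLocalRing.le_maximalIdeal
    intro h
    have h1 : (1 : R) ∈ RingHom.ker f := h ▸ Submodule.mem_top
    simp [RingHom.mem_ker] at h1
  -- p^n ∤ p
  have hpnp : ¬ (p ^ n ∣ p) := by
    intro h
    have h1 := Nat.le_of_dvd hp.pos h
    have h2 : p ^ 1 < p ^ n := Nat.pow_lt_pow_right hp.one_lt (by omega)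
    simp at h2; omega
  have hpZ0 : ((p : ZMod (p ^ n))) ≠ 0 := by
    rw [Ne, ZMod.natCast_eq_zero_iff]
    exact hpnp
  -- nonunits of ZMod (p^n) are divisible by p
  have hZnonunit : ∀ x : ZMod (p ^ n), ¬ IsUnit x → (p : ZMod (p ^ n)) ∣ x := by
    intro x hx
    have hval : ((x.val : ℕ) : ZMod (p ^ n)) = x := ZMod.natCast_rightInverse x
    have hpd : p ∣ x.val := by
      by_contra hpd
      exact hx (hval ▸ (ZMod.isUnit_iff_coprime x.val (p ^ n)).mpr
        (((hp.coprime_iff_not_dvd).mpr hpd).symm.pow_right n))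
    obtain ⟨c, hc⟩ := hpd
    exact ⟨(c : ZMod (p ^ n)), by rw [← hval, hc]; push_cast; ring⟩
  -- p ≠ 0 in R
  have hpR0 : (p : R) ≠ 0 := by
    intro h
    apply hpZ0
    rw [← map_natCast f p, h, map_zero]
  -- p is not a unit in R
  have hpRnu : ¬ IsUnit (p : R) := by
    intro h
    have h1 : IsUnit ((p : ZMod (p ^ n))) := by rw [← map_natCast f p]; exact h.map f
    rw [ZMod.isUnit_iff_coprime] at h1
    exact (hp.coprime_iff_not_dvd.mp h1) (dvd_pow_self p (by omega))
  have hnilp : IsNilpotent ((p : ZMod (p ^ n))) := ⟨n, by rw [← Nat.cast_pow, ZMod.natCast_self]⟩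
  -- p is irreducible in R
  obtain ⟨π, hπ⟩ := IsDiscreteValuationRing.exists_irreducible R
  obtain ⟨k, u, hk⟩ := IsDiscreteValuationRing.eq_unit_mul_pow_irreducible hpR0 hπ
  have hpirr : Irreducible (p : R) := by
    have hk1 : k = 1 := by
      rcases k with _ | _ | k
      · exfalso; apply hpRnu; rw [hk, pow_zero, mul_one]; exact u.isUnit
      · rfl
      · exfalso
        have hfπ : (p : ZMod (p ^ n)) ∣ f π :=
          hZnonunit _ (fun h => hπ.not_isUnit ((isUnit_map_iff f π).mp h))
        obtain ⟨c, hc⟩ := hfπ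
        set q : ZMod (p ^ n) := (p : ZMod (p ^ n)) with hq
        have h1 : q = f u * (q * c) ^ (k + 2) := by
          conv_lhs => rw [hq, ← map_natCast f p, hk]
          rw [_root_.map_mul, map_pow, hc]
        have h2 : q * (1 - f u * (q ^ (k + 1) * c ^ (k + 2))) = 0 := by
          rw [mul_sub, mul_one]
          nth_rewrite 1 [h1]
          ring
        have hnil : IsNilpotent (f u * (q ^ (k + 1) * c ^ (k + 2))) := by
          obtain ⟨m, hm⟩ := hnilp
          have hz : (q ^ (k + 1)) ^ m = 0 := by
            rw [← pow_mul, mul_comm, pow_mul, hm, zero_pow (Nat.succ_ne_zero k)]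
          exact ⟨m, by rw [mul_pow, mul_pow, hz, zero_mul, mul_zero]⟩
        have := (IsNilpotent.isUnit_one_sub hnil).mul_left_eq_zero.mp h2
        exact hpZ0 this
    rw [hk, hk1, pow_one]
    exact (irreducible_units_mul (y := π) u).mpr hπ
  have hmax : maximalIdeal R = Ideal.span {(p : R)} :=
    (IsDiscreteValuationRing.irreducible_iff_uniformizer _).mp hpirr
  -- integers coprime to p are units in R
  have hintu : ∀ t : ℤ, ¬ (p : ℤ) ∣ t → IsUnit (t : R) := by
    intro t ht
    by_contra hnu
    have h1 : ¬ IsUnit (f ((t : ℤ) : R)) := fun h => hnu ((isUnit_map_iff f _).mp h)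
    rw [map_intCast] at h1
    apply h1
    have hcop : IsCoprime ((p : ℤ) ^ n) t :=
      (((Nat.prime_iff_prime_int.mp hp).coprime_iff_not_dvd).mpr ht).pow_left
    obtain ⟨a, b, hab⟩ := hcop
    have h2 := congrArg (fun z : ℤ => (z : ZMod (p ^ n))) hab
    push_cast at h2
    have h3 : ((p : ZMod (p ^ n))) ^ n = 0 := by
      rw [← Nat.cast_pow, ZMod.natCast_self]
    rw [h3, mul_zero, zero_add] at h2
    exact IsUnit.of_mul_eq_one _ (by rw [mul_comm]; exact h2)
  have hdvd_p : ∀ t : ℤ, (t : R) ∈ maximalIdeal R → (p : ℤ) ∣ t := by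
    intro t htm
    by_contra h
    exact ((mem_maximalIdeal _).mp htm) (hintu t h)
  -- key divisibility lemmas
  have key : ∀ k : ℕ, ∀ t : ℤ, (t : R) ∈ maximalIdeal R ^ k → (p : ℤ) ^ k ∣ t := by
    intro k
    induction k with
    | zero => intro t _; simp
    | succ k ih =>
      intro t htm
      have htm1 : (t : R) ∈ maximalIdeal R := (Ideal.pow_le_self (Nat.succ_ne_zero k)) htm
      obtain ⟨t', rfl⟩ := hdvd_p t htm1
      have ht' : ((t' : ℤ) : R) ∈ maximalIdeal R ^ k := by
        rw [hmax, Ideal.span_singleton_pow, Ideal.mem_span_singleton] at htm ⊢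
        have hd : (p : R) * (p : R) ^ k ∣ (p : R) * (t' : R) := by
          rw [← pow_succ']
          convert htm using 1
          push_cast; ring
        exact (mul_dvd_mul_iff_left hpR0).mp hd
      obtain ⟨s, hs⟩ := ih t' ht'
      exact ⟨s, by rw [hs]; ring⟩
  have key2 : ∀ k : ℕ, ∀ t : ℤ, (p : ℤ) ^ k ∣ t → (t : R) ∈ maximalIdeal R ^ k := by
    rintro k t ⟨s, hs⟩
    rw [hmax, Ideal.span_singleton_pow, Ideal.mem_span_singleton]
    exact ⟨(s : R), by rw [hs]; push_cast; ring⟩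
  -- integers are dense
  have hdense : ∀ k : ℕ, ∀ x : R, ∃ a : ℤ, x - a ∈ maximalIdeal R ^ k := by
    intro k
    induction k with
    | zero => intro x; exact ⟨0, by simp⟩
    | succ k ih =>
      intro x
      obtain ⟨a, ha⟩ := ih x
      rw [hmax, Ideal.span_singleton_pow, Ideal.mem_span_singleton] at ha
      obtain ⟨z, hz⟩ := ha
      refine ⟨a + ((f z).val : ℤ) * (p : ℤ) ^ k, ?_⟩
      have hz' : z - ((f z).val : R) ∈ maximalIdeal R := by
        apply hker
        rw [RingHom.mem_ker, map_sub, map_natCast, ZMod.natCast_rightInverse (f z), sub_self]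
      have heq : x - ((a + ((f z).val : ℤ) * (p : ℤ) ^ k : ℤ) : R)
          = (p : R) ^ k * (z - ((f z).val : R)) := by
        push_cast
        rw [mul_sub, ← hz]
        ring
      rw [heq, pow_succ]
      refine Ideal.mul_mem_mul ?_ hz'
      rw [hmax, Ideal.span_singleton_pow, Ideal.mem_span_singleton]
  -- characteristic of quotients
  have hchar : ∀ k : ℕ, CharP (R ⧸ (maximalIdeal R ^ k)) (p ^ k) := by
    intro k
    constructor
    intro a
    rw [← map_natCast (Ideal.Quotient.mk (maximalIdeal R ^ k)) a, Ideal.Quotient.eq_zero_iff_mem]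
    constructor
    · intro h
      have h2 := key k (a : ℤ) (by exact_mod_cast h)
      exact_mod_cast h2
    · intro h
      have h2 : ((a : ℤ) : R) ∈ maximalIdeal R ^ k := key2 k (a : ℤ) (by exact_mod_cast h)
      exact_mod_cast h2
  -- the compatible family of maps to ZMod (p^k)
  obtain ⟨fk, hfk, hfksurj⟩ : ∃ fk : ∀ k : ℕ, R →+* ZMod (p ^ k),
      (∀ (k : ℕ) (x : R) (a : ℤ), x - a ∈ maximalIdeal R ^ k → fk k x = (a : ZMod (p ^ k))) ∧
      (∀ k, Function.Surjective (fk k)) := by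
    have he : ∀ k : ℕ, ∃ g : R ⧸ (maximalIdeal R ^ k) →+* ZMod (p ^ k),
        (∀ a : ℤ, g ((a : ℤ) : R ⧸ (maximalIdeal R ^ k)) = (a : ZMod (p ^ k))) ∧
        Function.Surjective g := by
      intro k
      haveI := hchar k
      set e0 : ZMod (p ^ k) →+* R ⧸ (maximalIdeal R ^ k) :=
        ZMod.castHom dvd_rfl (R ⧸ (maximalIdeal R ^ k)) with he0
      have hinj : Function.Injective e0 := ZMod.castHom_injective _
      have hsurj : Function.Surjective e0 := by
        intro y
        obtain ⟨x, rfl⟩ := Ideal.Quotient.mk_surjective y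
        obtain ⟨a, ha⟩ := hdense k x
        refine ⟨((a : ℤ) : ZMod (p ^ k)), ?_⟩
        rw [map_intCast, show ((a : ℤ) : R ⧸ (maximalIdeal R ^ k))
          = Ideal.Quotient.mk _ ((a : ℤ) : R) from (map_intCast (Ideal.Quotient.mk (maximalIdeal R ^ k)) a).symm,
          Ideal.Quotient.mk_eq_mk_iff_sub_mem]
        simpa using (maximalIdeal R ^ k).neg_mem ha
      let e := RingEquiv.ofBijective e0 ⟨hinj, hsurj⟩
      refine ⟨e.symm.toRingHom, fun a => ?_, e.symm.surjective⟩
      have h1 : ((a : ℤ) : R ⧸ (maximalIdeal R ^ k)) = e ((a : ZMod (p ^ k))) :=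
        (map_intCast e0 a).symm
      rw [RingEquiv.toRingHom_eq_coe, RingHom.coe_coe, h1, RingEquiv.symm_apply_apply]
    choose g hg hgsurj using he
    refine ⟨fun k => (g k).comp (Ideal.Quotient.mk _), fun k x a hxa => ?_, fun k =>
      (hgsurj k).comp Ideal.Quotient.mk_surjective⟩
    have h1 : (Ideal.Quotient.mk (maximalIdeal R ^ k)) x
        = ((a : ℤ) : R ⧸ (maximalIdeal R ^ k)) := by
      rw [show ((a : ℤ) : R ⧸ (maximalIdeal R ^ k))
        = Ideal.Quotient.mk _ ((a : ℤ) : R) from (map_intCast (Ideal.Quotient.mk (maximalIdeal R ^ k)) a).symm,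
        Ideal.Quotient.mk_eq_mk_iff_sub_mem]
      exact hxa
    rw [RingHom.comp_apply, h1, hg]
  have hfk0 : ∀ (k : ℕ) (x : R), fk k x = 0 ↔ x ∈ maximalIdeal R ^ k := by
    intro k x
    constructor
    · intro h
      obtain ⟨a, ha⟩ := hdense k x
      have h2 := hfk k x a ha
      rw [h] at h2
      have h3 : ((p ^ k : ℕ) : ℤ) ∣ a := by
        rw [← ZMod.intCast_zmod_eq_zero_iff_dvd, ← h2]
      have h4 : ((a : ℤ) : R) ∈ maximalIdeal R ^ k := key2 k a (by push_cast at h3 ⊢; exact h3)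
      have h5 := Ideal.add_mem _ ha h4
      simpa using h5
    · intro h
      simpa using hfk k x 0 (by simpa using h)
  have compat : ∀ (k1 k2 : ℕ) (hk : k1 ≤ k2),
      (ZMod.castHom (pow_dvd_pow p hk) (ZMod (p ^ k1))).comp (fk k2) = fk k1 := by
    intro k1 k2 hk
    ext x
    obtain ⟨a, ha⟩ := hdense k2 x
    have ha1 : x - a ∈ maximalIdeal R ^ k1 := Ideal.pow_le_pow_right hk ha
    rw [RingHom.comp_apply, hfk k2 x a ha, map_intCast, hfk k1 x a ha1]
  let g := PadicInt.lift compat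
  have gspec : ∀ (k : ℕ) (x : R), PadicInt.toZModPow k (g x) = fk k x := fun k x =>
    RingHom.congr_fun (PadicInt.lift_spec compat k) x
  have ginj : Function.Injective g := by
    rw [injective_iff_map_eq_zero]
    intro x hx
    refine IsHausdorff.haus (IsAdicComplete.toIsHausdorff
      (I := maximalIdeal R) (M := R)) x fun k => ?_
    refine SModEq.zero.mpr ?_
    rw [smul_eq_mul, Ideal.mul_top]
    exact (hfk0 k x).mp (by rw [← gspec k x, hx, map_zero])
  have gsurj : Function.Surjective g := by
    intro x
    have hrk : ∀ k : ℕ, ∃ r : R, fk k r = PadicInt.toZModPow k x := fun k => hfksurj k _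
    choose r hr using hrk
    have hcomp : ∀ {i j : ℕ}, i ≤ j →
        r i ≡ r j [SMOD ((maximalIdeal R ^ i • ⊤ : Ideal R) : Submodule R R)] := by
      intro i j hij
      rw [SModEq.sub_mem, smul_eq_mul, Ideal.mul_top]
      rw [← hfk0 i (r i - r j)]
      have h1 : fk i (r j) = PadicInt.toZModPow i x := by
        rw [← RingHom.congr_fun (compat i j hij) (r j), RingHom.comp_apply,
          ZMod.castHom_apply, hr j, PadicInt.cast_toZModPow i j hij x]
      rw [map_sub, hr i, h1, sub_self]
    obtain ⟨L, hL⟩ := IsPrecomplete.prec (IsAdicComplete.toIsPrecomplete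
      (I := maximalIdeal R) (M := R)) @hcomp
    refine ⟨L, ?_⟩
    apply PadicInt.ext_of_toZModPow.mp
    intro k
    rw [gspec k L, ← hr k]
    have hm : L - r k ∈ maximalIdeal R ^ k := by
      have h1 := hL k
      rw [SModEq.sub_mem, smul_eq_mul, Ideal.mul_top] at h1
      simpa using (maximalIdeal R ^ k).neg_mem h1
    have h2 := (hfk0 k (L - r k)).mpr hm
    rw [map_sub, sub_eq_zero] at h2
    exact h2
  exact ⟨RingEquiv.ofBijective g ⟨ginj, gsurj⟩⟩
end

section
/- Let p be a prime, let R and T be commutative rings, and let f : R → T be a surjective ring homomorphism. Suppose that: (a) T has no p-torsion, i.e. p·t = 0 implies t = 0 for t ∈ T; (b) the induced map R/pR → T/pT is injective (hence an isomorphism); and (c) R is p-adically separated, i.e. the intersection of the ideals pⁿR over all n ≥ 0 is zero. Then f is injective, hence an isomorphism R ≅ T. -/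
/-- Let `p` be prime and `f : R → T` a surjective ring homomorphism of
commutative rings.  Suppose (a) `T` has no `p`-torsion; (b) the induced map
`R/pR → T/pT` is injective; (c) `R` is `p`-adically separated (`⋂ₙ pⁿR = 0`).
Then `f` is injective, hence an isomorphism. -/
theorem stmt_9 {R T : Type*} [CommRing R] [CommRing T] (p : ℕ) (hp : p.Prime)
    (f : R →+* T) (hf : Function.Surjective f)
    (htor : ∀ t : T, (p : T) * t = 0 → t = 0)
    (hinj : Function.Injective
      (Ideal.quotientMap (I := Ideal.span {(p : R)}) (Ideal.span {(p : T)}) f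
        (by
          rw [Ideal.span_le]
          intro x hx
          rw [Set.mem_singleton_iff] at hx
          subst hx
          rw [SetLike.mem_coe, Ideal.mem_comap, map_natCast]
          exact Ideal.subset_span (Set.mem_singleton _))))
    (hsep : (⨅ n : ℕ, (Ideal.span {(p : R)}) ^ n) = ⊥) :
    Function.Injective f ∧ Nonempty (R ≃+* T) := by
  have key : ∀ x : R, f x = 0 → ∃ s : R, f s = 0 ∧ x = p * s := by
    intro x hx
    have hmk : (Ideal.Quotient.mk (Ideal.span {(p : R)})) x = 0 := by
      apply hinj
      rw [Ideal.quotientMap_mk, hx, map_zero, map_zero]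
    rw [Ideal.Quotient.eq_zero_iff_mem, Ideal.mem_span_singleton] at hmk
    obtain ⟨s, rfl⟩ := hmk
    refine ⟨s, ?_, rfl⟩
    apply htor
    have := hx
    rwa [map_mul, map_natCast] at this
  have step : ∀ n : ℕ, ∀ x : R, f x = 0 → ∃ s : R, f s = 0 ∧ x = p ^ n * s := by
    intro n
    induction n with
    | zero => intro x hx; exact ⟨x, hx, by ring⟩
    | succ n ih =>
      intro x hx
      obtain ⟨s, hs, rfl⟩ := ih x hx
      obtain ⟨t, ht, rfl⟩ := key s hs
      exact ⟨t, ht, by ring⟩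
  have hker : Function.Injective f := by
    rw [injective_iff_map_eq_zero]
    intro x hx
    have : x ∈ (⨅ n : ℕ, (Ideal.span {(p : R)}) ^ n) := by
      rw [Ideal.mem_iInf]
      intro n
      obtain ⟨s, _, rfl⟩ := step n x hx
      rw [Ideal.span_singleton_pow]
      exact Ideal.mem_span_singleton.mpr ⟨s, rfl⟩
    rwa [hsep, Ideal.mem_bot] at this
  exact ⟨hker, ⟨RingEquiv.ofBijective f ⟨hker, hf⟩⟩⟩
end

section
/- Let p be a prime and e ≥ 1 an integer. Let I be an ideal of the power series ring ℤ_p[[X]] such that the quotient ℤ_p[[X]]/I has no p-torsion (p·t = 0 implies t = 0 in the quotient) and such that the image of I under the coefficientwise reduction map ℤ_p[[X]] → 𝔽_p[[X]] is the ideal (Xᵉ). Then I is a principal ideal generated by a monic polynomial f ∈ ℤ_p[X] of degree e all of whose coefficients below the leading one are divisible by p (so f ≡ Xᵉ mod p), and consequently ℤ_p[[X]]/I ≅ ℤ_p[X]/(f) is a free ℤ_p-module of rank e. -/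
open PowerSeries

namespace Stmt10

variable {p : ℕ} [Fact p.Prime]

open Classical in
noncomputable def pdiv (x : ℤ_[p]) : ℤ_[p] :=
  if h : (p:ℤ_[p]) ∣ x then h.choose else 0

lemma pdiv_spec {x : ℤ_[p]} (h : (p:ℤ_[p]) ∣ x) : (p:ℤ_[p]) * pdiv x = x := by
  open Classical in
rw [pdiv, dif_pos h]; exact h.choose_spec.symm

lemma dvd_iff_toZMod (x : ℤ_[p]) : (p:ℤ_[p]) ∣ x ↔ PadicInt.toZMod x = 0 := by
  rw [← RingHom.mem_ker, PadicInt.ker_toZMod, PadicInt.maximalIdeal_eq_span_p,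
    Ideal.mem_span_singleton]

lemma eq_zero_of_forall_pow_dvd (x : ℤ_[p]) (h : ∀ n, (p:ℤ_[p])^n ∣ x) : x = 0 := by
  have hp1 : (1:ℝ) < p := by exact_mod_cast (Fact.out : p.Prime).one_lt
  have hb : ∀ n : ℕ, ‖x‖ ≤ ((p:ℝ)⁻¹)^n := by
    intro n
    have := (PadicInt.norm_le_pow_iff_mem_span_pow x n).mpr
      (Ideal.mem_span_singleton.mpr (h n))
    rwa [zpow_neg, zpow_natCast, ← inv_pow] at this
  have htend : Filter.Tendsto (fun n : ℕ => ((p:ℝ)⁻¹)^n) Filter.atTop (nhds 0) := by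
    apply tendsto_pow_atTop_nhds_zero_of_lt_one
    · positivity
    · rw [inv_lt_one_iff₀]; right; exact hp1
  have h0 : ‖x‖ ≤ 0 := ge_of_tendsto' htend hb
  simpa using le_antisymm h0 (norm_nonneg x)


lemma summable_aux (c : ℕ → ℤ_[p]) : Summable (fun n => (p:ℤ_[p])^n * c n) := by
  have hp1 : (1:ℝ) < p := by exact_mod_cast (Fact.out : p.Prime).one_lt
  apply Summable.of_norm_bounded (g := fun n => ((p:ℝ)⁻¹)^n)
  · apply summable_geometric_of_lt_one (by positivity)
    rw [inv_lt_one_iff₀]; right; exact hp1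
  · intro n
    calc ‖(p:ℤ_[p])^n * c n‖ ≤ ‖(p:ℤ_[p])^n‖ * ‖c n‖ := norm_mul_le _ _
    _ ≤ ‖(p:ℤ_[p])^n‖ * 1 := by
        exact mul_le_mul_of_nonneg_left (PadicInt.norm_le_one _) (norm_nonneg _)
    _ = ((p:ℝ)⁻¹)^n := by
        rw [mul_one, norm_pow, PadicInt.norm_p, inv_pow]

noncomputable def plim (c : ℕ → ℤ_[p]) : ℤ_[p] := ∑' n, (p:ℤ_[p])^n * c n

lemma plim_split (c : ℕ → ℤ_[p]) (N : ℕ) :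
    plim c = (∑ n ∈ Finset.range N, (p:ℤ_[p])^n * c n) + (p:ℤ_[p])^N * plim (fun n => c (N+n)) := by
  rw [plim, ← Summable.sum_add_tsum_nat_add N (summable_aux c)]
  congr 1
  rw [plim, ← Summable.tsum_mul_left _ (summable_aux _)]
  congr 1; funext n
  rw [add_comm n N, pow_add]; ring

lemma plim_zero : plim (fun _ => (0:ℤ_[p])) = 0 := by simp [plim]

noncomputable def psum (c : ℕ → PowerSeries ℤ_[p]) : PowerSeries ℤ_[p] :=
  PowerSeries.mk fun j => plim (fun n => PowerSeries.coeff j (c n))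

lemma psum_split (c : ℕ → PowerSeries ℤ_[p]) (N : ℕ) :
    psum c = (∑ n ∈ Finset.range N, (p:ℤ_[p])^n • c n)
      + (p:ℤ_[p])^N • psum (fun n => c (N+n)) := by
  ext j
  simp only [psum, coeff_mk, map_add, map_sum, PowerSeries.coeff_smul, smul_eq_mul, coeff_mk]
  rw [plim_split _ N]


noncomputable def rOf (e : ℕ) (a : PowerSeries ℤ_[p]) : PowerSeries ℤ_[p] :=
  PowerSeries.mk fun i => if i < e then PowerSeries.coeff i a else 0

noncomputable def qOf (e : ℕ) (a : PowerSeries ℤ_[p]) : PowerSeries ℤ_[p] :=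
  PowerSeries.mk fun k => PowerSeries.coeff (e+k) a

lemma coeff_rOf_ge (e : ℕ) (a : PowerSeries ℤ_[p]) {i : ℕ} (hi : e ≤ i) :
    PowerSeries.coeff i (rOf e a) = 0 := by
  simp [rOf, Nat.not_lt.mpr hi]

lemma map_mk (f : ℤ_[p] →+* ZMod p) (c : ℕ → ℤ_[p]) :
    PowerSeries.map f (PowerSeries.mk c) = PowerSeries.mk fun i => f (c i) := by
  ext i; simp [PowerSeries.coeff_map]

lemma key_step {e : ℕ} {g : PowerSeries ℤ_[p]}
    (hg : PowerSeries.map (PadicInt.toZMod (p := p)) g = PowerSeries.X ^ e)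
    (a : PowerSeries ℤ_[p]) (i : ℕ) :
    (p:ℤ_[p]) ∣ PowerSeries.coeff i (a - rOf e a - qOf e a * g) := by
  rw [dvd_iff_toZMod, ← PowerSeries.coeff_map]
  simp only [map_sub, map_mul, hg, rOf, qOf, map_mk]
  rcases lt_or_ge i e with hi | hi
  · rw [PowerSeries.coeff_mul_X_pow']
    simp [PowerSeries.coeff_map, hi, Nat.not_le.mpr hi, apply_ite (PadicInt.toZMod (p:=p))]
  · rw [PowerSeries.coeff_mul_X_pow']
    simp [PowerSeries.coeff_map, hi, Nat.not_lt.mpr hi, Nat.sub_add_cancel hi,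
      apply_ite (PadicInt.toZMod (p:=p))]


noncomputable def hseq (e : ℕ) (g h : PowerSeries ℤ_[p]) : ℕ → PowerSeries ℤ_[p]
  | 0 => h
  | n+1 => PowerSeries.mk fun i => pdiv (PowerSeries.coeff i
      (hseq e g h n - rOf e (hseq e g h n) - qOf e (hseq e g h n) * g))

lemma hseq_step {e : ℕ} {g : PowerSeries ℤ_[p]}
    (hg : PowerSeries.map (PadicInt.toZMod (p := p)) g = PowerSeries.X ^ e)
    (h : PowerSeries ℤ_[p]) (n : ℕ) :
    hseq e g h n = rOf e (hseq e g h n) + qOf e (hseq e g h n) * g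
      + (p:ℤ_[p]) • hseq e g h (n+1) := by
  have : (p:ℤ_[p]) • hseq e g h (n+1)
      = hseq e g h n - rOf e (hseq e g h n) - qOf e (hseq e g h n) * g := by
    ext i
    rw [PowerSeries.coeff_smul, hseq]
    simp only [coeff_mk, smul_eq_mul]
    exact pdiv_spec (key_step hg _ i)
  rw [this]; ring

lemma hseq_partial {e : ℕ} {g : PowerSeries ℤ_[p]}
    (hg : PowerSeries.map (PadicInt.toZMod (p := p)) g = PowerSeries.X ^ e)
    (h : PowerSeries ℤ_[p]) (N : ℕ) :
    h = (∑ n ∈ Finset.range N, (p:ℤ_[p])^n • rOf e (hseq e g h n))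
      + (∑ n ∈ Finset.range N, (p:ℤ_[p])^n • qOf e (hseq e g h n)) * g
      + (p:ℤ_[p])^N • hseq e g h N := by
  induction N with
  | zero => simp [hseq]
  | succ N ih =>
    have hx : (p:ℤ_[p])^N • hseq e g h N = (p:ℤ_[p])^N • rOf e (hseq e g h N)
        + ((p:ℤ_[p])^N • qOf e (hseq e g h N)) * g
        + (p:ℤ_[p])^(N+1) • hseq e g h (N+1) := by
      conv_lhs => rw [hseq_step hg h N]
      simp only [smul_add, smul_mul_assoc, smul_smul, ← pow_succ]
    rw [Finset.sum_range_succ, Finset.sum_range_succ]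
    conv_lhs => rw [ih, hx]
    simp only [add_mul]
    ring

theorem wdiv {e : ℕ} {g : PowerSeries ℤ_[p]}
    (hg : PowerSeries.map (PadicInt.toZMod (p := p)) g = PowerSeries.X ^ e)
    (h : PowerSeries ℤ_[p]) :
    ∃ q r : PowerSeries ℤ_[p], h = q * g + r ∧
      ∀ i, e ≤ i → PowerSeries.coeff i r = 0 := by
  refine ⟨psum (fun n => qOf e (hseq e g h n)), psum (fun n => rOf e (hseq e g h n)),
    ?_, ?_⟩
  · rw [← sub_eq_zero]
    ext i
    rw [map_zero]
    apply eq_zero_of_forall_pow_dvd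
    intro N
    have key : h - ((psum fun n => qOf e (hseq e g h n)) * g
        + psum (fun n => rOf e (hseq e g h n)))
        = (p:ℤ_[p])^N • (hseq e g h N
          - (psum fun n => qOf e (hseq e g h (N+n))) * g
          - psum (fun n => rOf e (hseq e g h (N+n)))) := by
      calc h - ((psum fun n => qOf e (hseq e g h n)) * g
          + psum (fun n => rOf e (hseq e g h n)))
          = ((∑ n ∈ Finset.range N, (p:ℤ_[p])^n • rOf e (hseq e g h n))
              + (∑ n ∈ Finset.range N, (p:ℤ_[p])^n • qOf e (hseq e g h n)) * g
              + (p:ℤ_[p])^N • hseq e g h N)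
            - ((((∑ n ∈ Finset.range N, (p:ℤ_[p])^n • qOf e (hseq e g h n))
                + (p:ℤ_[p])^N • psum (fun n => qOf e (hseq e g h (N+n)))) * g)
              + ((∑ n ∈ Finset.range N, (p:ℤ_[p])^n • rOf e (hseq e g h n))
                + (p:ℤ_[p])^N • psum (fun n => rOf e (hseq e g h (N+n))))) := by
            rw [← hseq_partial hg h N, ← psum_split, ← psum_split]
        _ = _ := by
            simp only [smul_sub, smul_mul_assoc, add_mul]
            ring
    rw [key, PowerSeries.coeff_smul, smul_eq_mul]
    exact Dvd.intro _ rfl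
  · intro i hi
    have hz : (fun n => PowerSeries.coeff (R := ℤ_[p]) i (rOf e (hseq e g h n)))
        = fun _ => (0:ℤ_[p]) := by
      funext n; simp [rOf, Nat.not_lt.mpr hi]
    simp only [psum, coeff_mk]
    rw [hz, plim_zero]

lemma toZMod_surjective : Function.Surjective (PadicInt.toZMod (p := p)) := by
  intro z
  refine ⟨(z.val : ℤ_[p]), ?_⟩
  rw [map_natCast, ZMod.natCast_val, ZMod.cast_id]

lemma map_toZMod_surjective :
    Function.Surjective (PowerSeries.map (PadicInt.toZMod (p := p))) := by
  intro φ
  refine ⟨PowerSeries.mk fun i => (toZMod_surjective (PowerSeries.coeff i φ)).choose, ?_⟩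
  ext i
  rw [PowerSeries.coeff_map, coeff_mk]
  exact (toZMod_surjective (PowerSeries.coeff i φ)).choose_spec

theorem low_deg_zero (e : ℕ) (I : Ideal (PowerSeries ℤ_[p]))
    (htor : ∀ t : PowerSeries ℤ_[p] ⧸ I, (p : PowerSeries ℤ_[p] ⧸ I) * t = 0 → t = 0)
    (himg : Ideal.map (PowerSeries.map (PadicInt.toZMod (p := p))) I
      = Ideal.span {(PowerSeries.X : PowerSeries (ZMod p)) ^ e})
    {h : PowerSeries ℤ_[p]} (hI : h ∈ I)
    (hv : ∀ i, e ≤ i → PowerSeries.coeff i h = 0) : h = 0 := by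
  have main : ∀ N : ℕ, ∀ h : PowerSeries ℤ_[p], h ∈ I →
      (∀ i, e ≤ i → PowerSeries.coeff i h = 0) →
      ∀ i, (p:ℤ_[p])^N ∣ PowerSeries.coeff i h := by
    intro N
    induction N with
    | zero => intro h _ _ i; simp
    | succ N ih =>
      intro h hI hv i
      -- first: map h = 0, so all coeffs divisible by p
      have hmap : PowerSeries.map (PadicInt.toZMod (p := p)) h = 0 := by
        have hmem : PowerSeries.map (PadicInt.toZMod (p := p)) h
            ∈ Ideal.span {(PowerSeries.X : PowerSeries (ZMod p)) ^ e} := by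
          rw [← himg]; exact Ideal.mem_map_of_mem _ hI
        obtain ⟨s, hs⟩ := Ideal.mem_span_singleton'.mp hmem
        ext j
        rcases lt_or_ge j e with hj | hj
        · rw [← hs, map_zero, mul_comm, PowerSeries.coeff_X_pow_mul',
            if_neg (Nat.not_le.mpr hj)]
        · rw [PowerSeries.coeff_map, hv j hj, map_zero, map_zero]
      have hdvd : ∀ j, (p:ℤ_[p]) ∣ PowerSeries.coeff j h := by
        intro j
        rw [dvd_iff_toZMod, ← PowerSeries.coeff_map, hmap, map_zero]
      set h₁ : PowerSeries ℤ_[p] :=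
        PowerSeries.mk fun j => pdiv (PowerSeries.coeff j h) with hh₁
      have hph₁ : ((p:ℕ) : PowerSeries ℤ_[p]) * h₁ = h := by
        ext j
        rw [← map_natCast (PowerSeries.C (R := ℤ_[p])) p, PowerSeries.coeff_C_mul, hh₁, coeff_mk]
        exact pdiv_spec (hdvd j)
      have hmem₁ : h₁ ∈ I := by
        have h0 : (Ideal.Quotient.mk I) h = 0 := Ideal.Quotient.eq_zero_iff_mem.mpr hI
        have : (p : PowerSeries ℤ_[p] ⧸ I) * (Ideal.Quotient.mk I h₁) = 0 := by
          rw [← map_natCast (Ideal.Quotient.mk I), ← map_mul, hph₁, h0]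
        exact Ideal.Quotient.eq_zero_iff_mem.mp (htor _ this)
      have hv₁ : ∀ i, e ≤ i → PowerSeries.coeff i h₁ = 0 := by
        intro i hi
        have hps := pdiv_spec (hdvd i)
        rw [hv i hi] at hps
        have hp0 : (p:ℤ_[p]) ≠ 0 := Nat.cast_ne_zero.mpr (Fact.out : p.Prime).ne_zero
        have hc : PowerSeries.coeff (R := ℤ_[p]) i h₁ = pdiv ((PowerSeries.coeff (R := ℤ_[p]) i) h) := by
          rw [hh₁, coeff_mk]
        rcases mul_eq_zero.mp hps with h' | h'
        · exact absurd h' hp0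
        · rw [hc, hv i hi, h']
      have := ih h₁ hmem₁ hv₁ i
      have hfin : PowerSeries.coeff i h = (p:ℤ_[p]) * PowerSeries.coeff i h₁ := by
        simpa [hh₁] using (pdiv_spec (hdvd i)).symm
      rw [hfin, pow_succ, mul_comm ((p:ℤ_[p])^N)]
      exact mul_dvd_mul_left _ this
  apply PowerSeries.ext
  intro i
  rw [map_zero]
  exact eq_zero_of_forall_pow_dvd _ (fun N => main N h hI hv i)

lemma coeff_fin_sum (e : ℕ) (c : Fin e → ℤ_[p]) (j : ℕ) :
    PowerSeries.coeff (R := ℤ_[p]) j (∑ i : Fin e, c i • (PowerSeries.X (R := ℤ_[p]))^(i:ℕ))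
      = if hj : j < e then c ⟨j, hj⟩ else 0 := by
  rw [map_sum]
  split
  · next hj =>
    rw [Finset.sum_eq_single (⟨j, hj⟩ : Fin e)]
    · simp [PowerSeries.coeff_smul, PowerSeries.coeff_X_pow]
    · intro i _ hne
      have : j ≠ (i:ℕ) := by
        intro hji; apply hne; apply Fin.ext; simp [← hji]
      simp [PowerSeries.coeff_smul, PowerSeries.coeff_X_pow, this]
    · intro hmem; exact absurd (Finset.mem_univ _) hmem
  · next hj =>
    apply Finset.sum_eq_zero
    intro i _
    have : j ≠ (i:ℕ) := by
      intro hji; exact hj (hji ▸ i.isLt)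
    simp [PowerSeries.coeff_smul, PowerSeries.coeff_X_pow, this]


set_option maxHeartbeats 1000000 in
set_option synthInstance.maxHeartbeats 400000 in
noncomputable def quotBasis (p : ℕ) [Fact p.Prime] (e : ℕ)
    (I : Ideal (PowerSeries ℤ_[p]))
    (htor : ∀ t : PowerSeries ℤ_[p] ⧸ I, (p : PowerSeries ℤ_[p] ⧸ I) * t = 0 → t = 0)
    (himg : Ideal.map (PowerSeries.map (PadicInt.toZMod (p := p))) I
      = Ideal.span {(PowerSeries.X : PowerSeries (ZMod p)) ^ e})
    {g : PowerSeries ℤ_[p]} (hgI : g ∈ I)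
    (hg : PowerSeries.map (PadicInt.toZMod (p := p)) g = PowerSeries.X ^ e) :
    Module.Basis (Fin e) ℤ_[p] (PowerSeries ℤ_[p] ⧸ I) := by
  apply Module.Basis.mk (v := fun i : Fin e =>
    Ideal.Quotient.mkₐ ℤ_[p] I ((PowerSeries.X : PowerSeries ℤ_[p]) ^ (i:ℕ)))
  · rw [Fintype.linearIndependent_iff]
    intro c hc i
    have hc' : Ideal.Quotient.mkₐ ℤ_[p] I
        (∑ i : Fin e, c i • (PowerSeries.X : PowerSeries ℤ_[p]) ^ (i:ℕ)) = 0 := by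
      rw [map_sum]
      simpa [map_smul] using hc
    have hmem : (∑ i : Fin e, c i • (PowerSeries.X : PowerSeries ℤ_[p]) ^ (i:ℕ)) ∈ I := by
      rwa [Ideal.Quotient.mkₐ_eq_mk, Ideal.Quotient.eq_zero_iff_mem] at hc'
    have hz := low_deg_zero e I htor himg hmem (fun j hj => by
      rw [coeff_fin_sum, dif_neg (Nat.not_lt.mpr hj)])
    have := congrArg (PowerSeries.coeff (R := ℤ_[p]) (i:ℕ)) hz
    rwa [coeff_fin_sum, dif_pos i.isLt, Fin.eta, map_zero] at this
  · intro x _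
    obtain ⟨h, rfl⟩ := Ideal.Quotient.mk_surjective x
    obtain ⟨q, r, hqr', hrv⟩ := wdiv hg h
    have hmkr : Ideal.Quotient.mk I h = Ideal.Quotient.mk I r := by
      rw [Ideal.Quotient.mk_eq_mk_iff_sub_mem]
      have : h - r = q * g := by rw [hqr']; ring
      rw [this]
      exact Ideal.mul_mem_left I q hgI
    have hrsum : r = ∑ i : Fin e,
        (PowerSeries.coeff (R := ℤ_[p]) (i:ℕ) r) • (PowerSeries.X : PowerSeries ℤ_[p]) ^ (i:ℕ) := by
      ext j
      rw [coeff_fin_sum]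
      split
      · rfl
      · next hj => exact hrv j (Nat.le_of_not_lt hj)
    rw [hmkr, hrsum]
    have : Ideal.Quotient.mk I (∑ i : Fin e,
        (PowerSeries.coeff (R := ℤ_[p]) (i:ℕ) r) • (PowerSeries.X : PowerSeries ℤ_[p]) ^ (i:ℕ))
        = ∑ i : Fin e, (PowerSeries.coeff (R := ℤ_[p]) (i:ℕ) r) •
          (Ideal.Quotient.mkₐ ℤ_[p] I ((PowerSeries.X : PowerSeries ℤ_[p]) ^ (i:ℕ))) := by
      rw [← Ideal.Quotient.mkₐ_eq_mk (R₁ := ℤ_[p]), map_sum]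
      simp [map_smul]
    rw [this]
    exact Submodule.sum_mem _ (fun i _ => Submodule.smul_mem _ _
      (Submodule.subset_span (Set.mem_range_self i)))

end Stmt10

open Stmt10 in
/-- Let `p` be prime and `e ≥ 1`. Let `I` be an ideal of `ℤ_p[[X]]` such
that `ℤ_p[[X]]/I` has no `p`-torsion and the image of `I` under coefficientwise reduction
`ℤ_p[[X]] → 𝔽_p[[X]]` is the ideal `(Xᵉ)`.  Then `I` is principal, generated by a monic
polynomial `f` of degree `e` with `f ≡ Xᵉ (mod p)`, and `ℤ_p[[X]]/I` is a free `ℤ_p`-module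
of rank `e`. -/
theorem stmt_10 (p : ℕ) [Fact p.Prime] (e : ℕ) (he : 1 ≤ e)
    (I : Ideal (PowerSeries ℤ_[p]))
    (htor : ∀ t : PowerSeries ℤ_[p] ⧸ I, (p : PowerSeries ℤ_[p] ⧸ I) * t = 0 → t = 0)
    (himg : Ideal.map (PowerSeries.map (PadicInt.toZMod (p := p))) I
      = Ideal.span {(PowerSeries.X : PowerSeries (ZMod p)) ^ e}) :
    ∃ f : Polynomial ℤ_[p], f.Monic ∧ f.natDegree = e ∧
      (∀ i < e, (p : ℤ_[p]) ∣ f.coeff i) ∧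
      I = Ideal.span {(f : PowerSeries ℤ_[p])} ∧
      Module.Free ℤ_[p] (PowerSeries ℤ_[p] ⧸ I) ∧
      Module.finrank ℤ_[p] (PowerSeries ℤ_[p] ⧸ I) = e := by
  classical
  -- obtain g ∈ I reducing to X^e
  obtain ⟨g, hgI, hg⟩ : ∃ g ∈ I,
      PowerSeries.map (PadicInt.toZMod (p := p)) g = PowerSeries.X ^ e := by
    have : (PowerSeries.X : PowerSeries (ZMod p)) ^ e
        ∈ Ideal.map (PowerSeries.map (PadicInt.toZMod (p := p))) I := by
      rw [himg]; exact Ideal.mem_span_singleton_self _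
    exact (Ideal.mem_map_iff_of_surjective _ map_toZMod_surjective).mp this
  -- divide X^e by g
  obtain ⟨q₀, r₀, hqr, hr₀⟩ := wdiv hg (PowerSeries.X ^ e)
  -- map r₀ = 0
  have hmapeq : PowerSeries.X ^ e = PowerSeries.map (PadicInt.toZMod (p := p)) q₀
      * PowerSeries.X ^ e + PowerSeries.map (PadicInt.toZMod (p := p)) r₀ := by
    have := congrArg (PowerSeries.map (PadicInt.toZMod (p := p))) hqr
    simpa [map_mul, map_add, map_pow, PowerSeries.map_X, hg] using this
  have hr₀map : PowerSeries.map (PadicInt.toZMod (p := p)) r₀ = 0 := by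
    ext j
    rcases lt_or_ge j e with hj | hj
    · have := congrArg (PowerSeries.coeff (R := ZMod p) j) hmapeq
      rw [PowerSeries.coeff_X_pow, if_neg (Nat.ne_of_lt hj), map_add, mul_comm,
        PowerSeries.coeff_X_pow_mul', if_neg (Nat.not_le.mpr hj)] at this
      simpa using this.symm
    · rw [PowerSeries.coeff_map, hr₀ j hj, map_zero, map_zero]
  have hq₀map : PowerSeries.map (PadicInt.toZMod (p := p)) q₀ = 1 := by
    have hX : (PowerSeries.X : PowerSeries (ZMod p)) ^ e ≠ 0 :=
      pow_ne_zero _ PowerSeries.X_ne_zero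
    have : PowerSeries.map (PadicInt.toZMod (p := p)) q₀ * PowerSeries.X ^ e
        = 1 * PowerSeries.X ^ e := by
      rw [one_mul]
      rw [hr₀map, add_zero] at hmapeq
      exact hmapeq.symm
    exact mul_right_cancel₀ hX this
  -- q₀ is a unit
  have hq₀unit : IsUnit q₀ := by
    rw [PowerSeries.isUnit_iff_constantCoeff]
    by_contra hc
    have hmem : PadicInt.toZMod (PowerSeries.constantCoeff (R := ℤ_[p]) q₀) = 0 := by
      rw [← dvd_iff_toZMod, ← Ideal.mem_span_singleton,
        ← PadicInt.maximalIdeal_eq_span_p]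
      exact hc
    have h1 : PadicInt.toZMod (PowerSeries.constantCoeff (R := ℤ_[p]) q₀) = 1 := by
      have := congrArg (PowerSeries.coeff (R := ZMod p) 0) hq₀map
      rw [PowerSeries.coeff_map, PowerSeries.coeff_zero_eq_constantCoeff] at this
      simpa using this
    rw [hmem] at h1
    exact zero_ne_one h1
  -- the power series f
  set fs : PowerSeries ℤ_[p] := PowerSeries.X ^ e - r₀ with hfs
  have hfseq : fs = q₀ * g := by rw [hfs, hqr]; ring
  have hfsI : fs ∈ I := hfseq ▸ Ideal.mul_mem_left I q₀ hgI
  -- I = span {fs}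
  have hIspan : I = Ideal.span {fs} := by
    apply le_antisymm
    · intro h hI
      obtain ⟨q, r, hqr', hrv⟩ := wdiv hg h
      have hrI : r ∈ I := by
        have : r = h - q * g := by rw [hqr']; ring
        rw [this]
        exact Submodule.sub_mem I hI (Ideal.mul_mem_left I q hgI)
      have hr0 : r = 0 := low_deg_zero e I htor himg hrI hrv
      rw [Ideal.mem_span_singleton]
      obtain ⟨u, hu⟩ := hq₀unit
      have hginv : g = (↑u⁻¹ : PowerSeries ℤ_[p]) * fs := by
        rw [hfseq, ← hu, ← mul_assoc, Units.inv_mul, one_mul]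
      refine ⟨(↑u⁻¹ : PowerSeries ℤ_[p]) * q, ?_⟩
      rw [hqr', hr0, add_zero, hginv]
      ring
    · rw [Ideal.span_le, Set.singleton_subset_iff]
      exact hfsI
  -- polynomial F
  set R₀ : Polynomial ℤ_[p] := PowerSeries.trunc e r₀ with hR₀
  have hR₀coe : (R₀ : PowerSeries ℤ_[p]) = r₀ := by
    ext j
    rw [Polynomial.coeff_coe, hR₀, PowerSeries.coeff_trunc]
    split
    · rfl
    · next hj => exact (hr₀ j (Nat.le_of_not_lt hj)).symm
  set F : Polynomial ℤ_[p] := Polynomial.X ^ e - R₀ with hF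
  have hFcoe : (F : PowerSeries ℤ_[p]) = fs := by
    rw [hF, Polynomial.coe_sub, Polynomial.coe_pow, Polynomial.coe_X, hR₀coe]
  have hdegR₀ : R₀.degree < (e : ℕ) := PowerSeries.degree_trunc_lt r₀ e
  have hFmonic : F.Monic := Polynomial.monic_X_pow_sub hdegR₀
  have hFdeg : F.natDegree = e := by
    apply Polynomial.natDegree_eq_of_degree_eq_some
    rw [hF]
    rw [Polynomial.degree_sub_eq_left_of_degree_lt]
    · exact Polynomial.degree_X_pow e
    · rw [Polynomial.degree_X_pow]; exact hdegR₀
  refine ⟨F, hFmonic, hFdeg, ?_, ?_, ?_, ?_⟩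
  · intro i hi
    have : F.coeff i = -(PowerSeries.coeff (R := ℤ_[p]) i r₀) := by
      rw [hF, Polynomial.coeff_sub, Polynomial.coeff_X_pow, if_neg (Nat.ne_of_lt hi),
        zero_sub, hR₀, PowerSeries.coeff_trunc, if_pos hi]
    rw [this, dvd_neg, dvd_iff_toZMod, ← PowerSeries.coeff_map, hr₀map, map_zero]
  · rw [hIspan, hFcoe]
  · exact Module.Free.of_basis (quotBasis p e I htor himg hgI hg)
  · rw [Module.finrank_eq_card_basis (quotBasis p e I htor himg hgI hg), Fintype.card_fin]
end

section
/- Let p be an odd prime and e ≥ 1 an integer. In the polynomial ring ℚ[u], define sequences (Xₙ) and (Yₙ) by X₀ = uᵉ, X_{n+1} = Xₙᵖ/p, and Y₀ = uᵉ + p, Y_{n+1} = Yₙᵖ/p (so that Xₙ = u^{epⁿ}/p^{vₙ} and Yₙ = (uᵉ+p)^{pⁿ}/p^{vₙ}, where vₙ = v_p(pⁿ!) = (pⁿ−1)/(p−1)). Then for every n ≥ 0 there exists g in the subring ℤ[X₀, X₁, X₂, …] of ℚ[u] generated over ℤ by all the Xᵢ such that Yₙ − Xₙ − p·∏_{i=0}^{n−1}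 Xᵢ^{p−1} = p²·g. In other words, Yₙ ≡ Xₙ + p·∏_{i=0}^{n−1} Xᵢ^{p−1} modulo p² times the ℤ-subalgebra generated by the Xᵢ. -/
lemma key_binomial {A : Type*} [CommRing A] {p : ℕ} (hp : p.Prime) (hodd : Odd p)
    (a b : A) :
    ∃ c : A, (a + (p : A) * b) ^ p
      = a ^ p + (p : A) ^ 2 * (a ^ (p - 1) * b) + (p : A) ^ 3 * c := by
  obtain ⟨q, hq⟩ : ∃ q, p = q + 2 := by
    have h2 := hp.two_le
    obtain ⟨m, hm⟩ := hodd
    refine ⟨p - 2, ?_⟩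
    omega
  subst hq
  have hq1 : 1 ≤ q := by
    obtain ⟨m, hm⟩ := hodd
    omega
  have hsum := add_pow a (((q + 2 : ℕ) : A) * b) (q + 2)
  rw [show q + 2 + 1 = (q + 1) + 1 + 1 from rfl, Finset.sum_range_succ,
    Finset.sum_range_succ] at hsum
  have hdvd : ((q + 2 : ℕ) : A) ^ 3 ∣
      ∑ k ∈ Finset.range (q + 1),
        a ^ k * (((q + 2 : ℕ) : A) * b) ^ (q + 2 - k) * ((q + 2).choose k) := by
    refine Finset.dvd_sum fun k hk => ?_
    have hk' : k ≤ q := Finset.mem_range_succ_iff.mp hk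
    have hndvd : ((q + 2) ^ 3 : ℕ) ∣ (q + 2) ^ (q + 2 - k) * (q + 2).choose k := by
      rcases Nat.lt_or_ge k q with h | h
      · exact Dvd.dvd.mul_right (pow_dvd_pow (q + 2) (by omega)) _
      · have hkq : k = q := le_antisymm hk' h
        have hc2 : q + 2 - k = 2 := by omega
        have hch : q + 2 ∣ (q + 2).choose k := hp.dvd_choose_self (by omega) (by omega)
        rw [hc2]
        obtain ⟨m, hm⟩ := hch
        exact ⟨m, by rw [hm]; ring⟩
    obtain ⟨m, hm⟩ := hndvd
    have hm' := congrArg (Nat.cast : ℕ → A) hm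
    push_cast at hm'
    refine ⟨(m : A) * (a ^ k * b ^ (q + 2 - k)), ?_⟩
    push_cast [mul_pow]
    linear_combination (a ^ k * b ^ (q + 2 - k)) * hm'
  obtain ⟨c, hc⟩ := hdvd
  refine ⟨c, ?_⟩
  rw [hsum, hc]
  have h1 : q + 2 - (q + 1) = 1 := by omega
  have h2 : q + 2 - (q + 2) = 0 := by omega
  have h3 : q + 2 - 1 = q + 1 := by omega
  rw [h1, h2, h3]
  push_cast [Nat.choose_succ_self_right, Nat.choose_self]
  ring

/-- Let `p` be an odd prime and `e ≥ 1`.  In `ℚ[u]` define `X₀ = uᵉ`,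
`X_{n+1} = Xₙᵖ/p`, `Y₀ = uᵉ + p`, `Y_{n+1} = Yₙᵖ/p`.  Then for every `n` one has
`Yₙ ≡ Xₙ + p·∏_{i<n} Xᵢ^(p-1)` modulo `p²` times the subring `ℤ[X₀, X₁, …]` of `ℚ[u]`
generated over `ℤ` by the `Xᵢ`. -/
theorem stmt_12 (p : ℕ) (hp : p.Prime) (hodd : Odd p) (e : ℕ) (he : 1 ≤ e)
    (X Y : ℕ → Polynomial ℚ)
    (hX0 : X 0 = Polynomial.X ^ e)
    (hXs : ∀ n, X (n + 1) = Polynomial.C ((p : ℚ)⁻¹) * X n ^ p)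
    (hY0 : Y 0 = Polynomial.X ^ e + Polynomial.C (p : ℚ))
    (hYs : ∀ n, Y (n + 1) = Polynomial.C ((p : ℚ)⁻¹) * Y n ^ p) :
    ∀ n : ℕ, ∃ g ∈ Algebra.adjoin ℤ (Set.range X),
      Y n - X n - (p : Polynomial ℚ) * ∏ i ∈ Finset.range n, X i ^ (p - 1)
        = (p : Polynomial ℚ) ^ 2 * g := by
  have hpQ : (p : ℚ) ≠ 0 := Nat.cast_ne_zero.mpr hp.ne_zero
  have hunit : Polynomial.C ((p : ℚ)⁻¹) * (p : Polynomial ℚ) = 1 := by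
    rw [← Polynomial.C_eq_natCast, ← Polynomial.C_mul, inv_mul_cancel₀ hpQ,
      Polynomial.C_1]
  have hXmem : ∀ i, X i ∈ Algebra.adjoin ℤ (Set.range X) :=
    fun i => Algebra.subset_adjoin ⟨i, rfl⟩
  intro n
  induction n with
  | zero =>
    refine ⟨0, Subalgebra.zero_mem _, ?_⟩
    rw [hY0, hX0]
    simp [Polynomial.C_eq_natCast]
  | succ n ih =>
    obtain ⟨g, hg, hgeq⟩ := ih
    set R := Algebra.adjoin ℤ (Set.range X) with hR
    set Pn := ∏ i ∈ Finset.range n, X i ^ (p - 1) with hPn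
    have hPmem : Pn ∈ R := prod_mem fun i _ => pow_mem (hXmem i) _
    have hbmem : Pn + (p : Polynomial ℚ) * g ∈ R :=
      add_mem hPmem (mul_mem (Subalgebra.natCast_mem R p) hg)
    obtain ⟨c, hc⟩ := key_binomial (p := p) hp hodd
      (⟨X n, hXmem n⟩ : R) (⟨Pn + (p : Polynomial ℚ) * g, hbmem⟩ : R)
    have hc' : (X n + (p : Polynomial ℚ) * (Pn + (p : Polynomial ℚ) * g)) ^ p
        = X n ^ p + (p : Polynomial ℚ) ^ 2 * (X n ^ (p - 1) * (Pn + (p : Polynomial ℚ) * g))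
          + (p : Polynomial ℚ) ^ 3 * (c : Polynomial ℚ) := by
      have h := congrArg (Subtype.val : _ → Polynomial ℚ) hc
      push_cast at h
      exact_mod_cast h
    have hYn : Y n = X n + (p : Polynomial ℚ) * (Pn + (p : Polynomial ℚ) * g) := by
      linear_combination hgeq
    have e2 : Y (n + 1) = X (n + 1)
        + (p : Polynomial ℚ) * (X n ^ (p - 1) * (Pn + (p : Polynomial ℚ) * g))
        + (p : Polynomial ℚ) ^ 2 * (c : Polynomial ℚ) := by
      rw [hYs, hYn, hc', hXs]
      linear_combination ((p : Polynomial ℚ) * (X n ^ (p - 1) * (Pn + (p : Polynomial ℚ) * g))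
        + (p : Polynomial ℚ) ^ 2 * (c : Polynomial ℚ)) * hunit
    refine ⟨X n ^ (p - 1) * g + (c : Polynomial ℚ),
      add_mem (mul_mem (pow_mem (hXmem n) _) hg) c.2, ?_⟩
    rw [e2, Finset.prod_range_succ]
    ring
end

section
/- Let S be a commutative ring, let p be a prime number with image p ∈ S, and let 0 → S/pS → M → S/pS → 0 be a short exact sequence of S-modules (i.e. an injective S-linear map S/pS → M and a surjective S-linear map M → S/pS whose kernel is the image of the first map). Then M is generated by two elements e₁, e₂ with p·e₁ = 0 and p·e₂ = η·e₁ for some η ∈ S; more precisely, there exists η ∈ S and an S-module isomorphism M ≅ (S ⊕ S)/N, where N is the submodule of S ⊕ S generated by (p, 0) and (−η, p). -/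
/-- Let `S` be a commutative ring, `p` a prime with image `p ∈ S`, and
`0 → S/pS → M → S/pS → 0` a short exact sequence of `S`-modules.  Then `M` is generated
by two elements `e₁, e₂` with `p·e₁ = 0` and `p·e₂ = η·e₁` for some `η ∈ S`; more
precisely, `M ≅ (S ⊕ S)/N` where `N` is generated by `(p, 0)` and `(-η, p)`. -/
theorem stmt_15 {S : Type*} [CommRing S] (p : ℕ) (hp : p.Prime)
    {M : Type*} [AddCommGroup M] [Module S M]
    (ι : (S ⧸ Ideal.span {(p : S)}) →ₗ[S] M)
    (π : M →ₗ[S] S ⧸ Ideal.span {(p : S)})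
    (hι : Function.Injective ι) (hπ : Function.Surjective π)
    (hexact : LinearMap.range ι = LinearMap.ker π) :
    ∃ (η : S) (e₁ e₂ : M),
      Submodule.span S {e₁, e₂} = ⊤ ∧
      (p : S) • e₁ = 0 ∧ (p : S) • e₂ = η • e₁ ∧
      Nonempty (M ≃ₗ[S]
        (S × S) ⧸ Submodule.span S {((p : S), (0 : S)), (-η, (p : S))}) := by
  have hpI : (p : S) ∈ Ideal.span {(p : S)} := Ideal.subset_span rfl
  set e₁ : M := ι 1 with he₁
  obtain ⟨e₂, he₂⟩ := hπ 1
  have hιmk : ∀ s : S, ι (Ideal.Quotient.mk (Ideal.span {(p : S)}) s) = s • e₁ := by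
    intro s
    have h1 : s • (1 : S ⧸ Ideal.span {(p : S)})
        = Ideal.Quotient.mk (Ideal.span {(p : S)}) s := by
      rw [← map_one (Ideal.Quotient.mk _), ← Ideal.Quotient.mk_eq_mk,
        ← Submodule.Quotient.mk_smul, smul_eq_mul, mul_one, Ideal.Quotient.mk_eq_mk]
    rw [← h1, map_smul]
  have hmkp : Ideal.Quotient.mk (Ideal.span {(p : S)}) (p : S) = 0 :=
    (Ideal.Quotient.eq_zero_iff_mem).2 hpI
  have hpe₁ : (p : S) • e₁ = 0 := by rw [← hιmk, hmkp, map_zero]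
  have hπe₁ : π e₁ = 0 := by
    have : e₁ ∈ LinearMap.ker π := hexact ▸ ⟨1, rfl⟩
    exact this
  have hsmul1 : ∀ s : S, s • (1 : S ⧸ Ideal.span {(p : S)})
      = Ideal.Quotient.mk (Ideal.span {(p : S)}) s := by
    intro s
    rw [← map_one (Ideal.Quotient.mk _), ← Ideal.Quotient.mk_eq_mk,
      ← Submodule.Quotient.mk_smul, smul_eq_mul, mul_one, Ideal.Quotient.mk_eq_mk]
  have hker : (p : S) • e₂ ∈ LinearMap.ker π := by
    rw [LinearMap.mem_ker, map_smul, he₂, hsmul1, hmkp]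
  rw [← hexact] at hker
  obtain ⟨x, hx⟩ := hker
  obtain ⟨η, rfl⟩ := Ideal.Quotient.mk_surjective x
  rw [hιmk] at hx
  have hspan : Submodule.span S {e₁, e₂} = ⊤ := by
    rw [eq_top_iff]
    rintro m -
    obtain ⟨s, hs⟩ := Ideal.Quotient.mk_surjective (π m)
    have hm : m - s • e₂ ∈ LinearMap.ker π := by
      rw [LinearMap.mem_ker, map_sub, map_smul, he₂, hsmul1, hs, sub_self]
    rw [← hexact] at hm
    obtain ⟨y, hy⟩ := hm
    obtain ⟨t, rfl⟩ := Ideal.Quotient.mk_surjective y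
    rw [hιmk] at hy
    rw [Submodule.mem_span_pair]
    exact ⟨t, s, by rw [hy]; abel⟩
  refine ⟨η, e₁, e₂, hspan, hpe₁, hx.symm, ?_⟩
  set φ : S × S →ₗ[S] M :=
    (LinearMap.toSpanSingleton S M e₁).coprod (LinearMap.toSpanSingleton S M e₂) with hφ
  have hφapp : ∀ a b : S, φ (a, b) = a • e₁ + b • e₂ := fun a b => rfl
  have hφsurj : Function.Surjective φ := by
    intro m
    have hm : m ∈ Submodule.span S {e₁, e₂} := hspan ▸ Submodule.mem_top
    rw [Submodule.mem_span_pair] at hm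
    obtain ⟨a, b, hab⟩ := hm
    exact ⟨(a, b), hab⟩
  have hkerφ : LinearMap.ker φ
      = Submodule.span S {((p : S), (0 : S)), (-η, (p : S))} := by
    apply le_antisymm
    · rintro ⟨a, b⟩ hab
      rw [LinearMap.mem_ker, hφapp] at hab
      -- apply π
      have hb : Ideal.Quotient.mk (Ideal.span {(p : S)}) b = 0 := by
        have := congrArg π hab
        rw [map_add, map_smul, map_smul, hπe₁, he₂, smul_zero, zero_add, hsmul1,
          map_zero] at this
        exact this
      rw [Ideal.Quotient.eq_zero_iff_mem, Ideal.mem_span_singleton] at hb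
      obtain ⟨c, hc⟩ := hb
      have key : (a + c * η) • e₁ = 0 := by
        have : a • e₁ + (c * η) • e₁ = 0 := by
          rw [mul_smul, ← hx.symm]
          calc a • e₁ + c • (p : S) • e₂ = a • e₁ + (c * (p:S)) • e₂ := by
                rw [mul_smul]
            _ = a • e₁ + b • e₂ := by rw [hc, mul_comm]
            _ = 0 := hab
        rw [← add_smul] at this
        exact this
      have : Ideal.Quotient.mk (Ideal.span {(p : S)}) (a + c * η) = 0 := by
        apply hι
        rw [hιmk, map_zero, key]
      rw [Ideal.Quotient.eq_zero_iff_mem, Ideal.mem_span_singleton] at this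
      obtain ⟨d, hd⟩ := this
      rw [Submodule.mem_span_pair]
      refine ⟨d, c, ?_⟩
      rw [Prod.smul_mk, Prod.smul_mk, Prod.mk_add_mk]
      refine Prod.ext ?_ ?_
      · simp only [smul_eq_mul]
        have : d * (p : S) = a + c * η := by rw [hd, mul_comm]
        rw [mul_neg, this]; ring
      · simp only [smul_eq_mul, mul_zero, zero_add, hc, mul_comm]
    · rw [Submodule.span_le]
      rintro z (rfl | rfl)
      · rw [SetLike.mem_coe, LinearMap.mem_ker, hφapp, hpe₁, zero_add, zero_smul]
      · rw [SetLike.mem_coe, LinearMap.mem_ker, hφapp, ← hx, neg_smul,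
          neg_add_cancel]
  refine ⟨?_⟩
  rw [← hkerφ]
  exact (φ.quotKerEquivOfSurjective hφsurj).symm
end

section
/- Let p be a prime, F a field of characteristic p, and a, b nonzero elements of F. Let d ∈ ℤ, and let γ : ℤ → F be a function with finite support such that: (a) γ(k) = 0 for all k < 0; (b) γ(k) = 0 whenever p does not divide k; and (c) b·γ(pk) = a·γ(k + d)^p for every k ∈ ℤ. Then either γ is identically zero, or there exist m ∈ ℕ and a nonzero c ∈ F such that d = m·(p − 1), b = a·c^{p−1} (so that a/b is a (p−1)-st power in Fˣ), and γ(pm) = c while γ(j) = 0 for every j ≠ pm. In particular, if d is not a nonnegative multiple of p − 1, then γ = 0. -/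
/-- Let `p` be prime, `F` a field of characteristic `p`, and `a, b`
nonzero elements of `F`.  Let `d ∈ ℤ` and let `γ : ℤ → F` have finite support with
(a) `γ k = 0` for `k < 0`; (b) `γ k = 0` when `p ∤ k`; (c) `b·γ(pk) = a·γ(k+d)^p` for all
`k`.  Then either `γ = 0`, or there are `m ∈ ℕ` and `c ≠ 0` in `F` with `d = m(p-1)`,
`b = a·c^(p-1)`, `γ(pm) = c` and `γ j = 0` for all `j ≠ pm`.  In particular, if `d` is
not a nonnegative multiple of `p - 1`, then `γ = 0`. -/
theorem stmt_16 (p : ℕ) (hp : p.Prime) {F : Type*} [Field F] [CharP F p]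
    (a b : F) (ha : a ≠ 0) (hb : b ≠ 0)
    (d : ℤ) (γ : ℤ → F) (hfin : (Function.support γ).Finite)
    (h0 : ∀ k : ℤ, k < 0 → γ k = 0)
    (h1 : ∀ k : ℤ, ¬ ((p : ℤ) ∣ k) → γ k = 0)
    (h2 : ∀ k : ℤ, b * γ ((p : ℤ) * k) = a * (γ (k + d)) ^ p) :
    (γ = 0 ∨ ∃ (m : ℕ) (c : F), c ≠ 0 ∧ d = (m : ℤ) * ((p : ℤ) - 1) ∧
      b = a * c ^ (p - 1) ∧ γ ((p : ℤ) * m) = c ∧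
      ∀ j : ℤ, j ≠ (p : ℤ) * m → γ j = 0) ∧
    ((¬ ∃ m : ℕ, d = (m : ℤ) * ((p : ℤ) - 1)) → γ = 0) := by
  have main : γ = 0 ∨ ∃ (m : ℕ) (c : F), c ≠ 0 ∧ d = (m : ℤ) * ((p : ℤ) - 1) ∧
      b = a * c ^ (p - 1) ∧ γ ((p : ℤ) * m) = c ∧
      ∀ j : ℤ, j ≠ (p : ℤ) * m → γ j = 0 := by
    by_cases hS : γ = 0
    · exact Or.inl hS
    right
    have hp1 : (1:ℤ) < (p:ℤ) := by exact_mod_cast hp.one_lt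
    -- the support is stable under t ↦ p(t-d)
    have hgmap : ∀ t : ℤ, γ t ≠ 0 → γ ((p:ℤ) * (t - d)) ≠ 0 := by
      intro t ht
      have h := h2 (t - d)
      rw [sub_add_cancel] at h
      intro hzero
      rw [hzero, mul_zero] at h
      exact (mul_ne_zero ha (pow_ne_zero _ ht)) h.symm
    set s := hfin.toFinset with hs
    have hmem : ∀ t : ℤ, t ∈ s ↔ γ t ≠ 0 := fun t => hfin.mem_toFinset
    have hne : s.Nonempty := by
      rw [Finset.nonempty_iff_ne_empty]
      intro h
      apply hS
      funext x
      by_contra hx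
      have : x ∈ s := (hmem x).mpr hx
      simp [h] at this
    set M := s.max' hne with hM
    set m := s.min' hne with hm
    have hMs : M ∈ s := s.max'_mem hne
    have hms : m ∈ s := s.min'_mem hne
    have hgM : (p:ℤ) * (M - d) ∈ s := (hmem _).mpr (hgmap M ((hmem M).mp hMs))
    have hgm : (p:ℤ) * (m - d) ∈ s := (hmem _).mpr (hgmap m ((hmem m).mp hms))
    have h3 : (p:ℤ) * (M - d) ≤ M := s.le_max' _ hgM
    have h4 : m ≤ (p:ℤ) * (m - d) := s.min'_le _ hgm
    have hmM : m ≤ M := s.min'_le _ hMs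
    have hMeq : m = M := le_antisymm hmM (by nlinarith)
    have hgMeq : (p:ℤ) * (M - d) = M :=
      le_antisymm h3 (hMeq.symm.le.trans (s.min'_le _ hgM))
    -- M ≥ 0 and p ∣ M
    have hγM : γ M ≠ 0 := (hmem M).mp hMs
    have hM0 : 0 ≤ M := by
      by_contra h
      exact hγM (h0 M (by omega))
    have hpM : (p:ℤ) ∣ M := by
      by_contra h
      exact hγM (h1 M h)
    obtain ⟨k, hk⟩ := hpM
    have hk0 : 0 ≤ k := by nlinarith
    have hd : d = k * ((p:ℤ) - 1) := by
      have : (p:ℤ) * d = (p:ℤ) * (k * ((p:ℤ) - 1)) := by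
        rw [hk] at hgMeq; ring_nf; ring_nf at hgMeq; linarith
      exact mul_left_cancel₀ (by positivity) this
    set c := γ M with hc
    have hkd : k + d = M := by rw [hd, hk]; ring
    have hbc : b * c = a * c ^ p := by
      have := h2 k
      rw [hkd, ← hk] at this
      exact this
    have hcp : c ^ p = c ^ (p - 1) * c := by
      rw [← pow_succ]
      congr 1
      omega
    have hb' : b = a * c ^ (p - 1) := by
      apply mul_right_cancel₀ hγM
      rw [hbc, hcp]; ring
    refine ⟨k.toNat, c, hγM, ?_, hb', ?_, ?_⟩
    · rw [hd]; congr 1; omega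
    · rw [show ((k.toNat : ℤ)) = k by omega, ← hk]
    · intro j hj
      by_contra hγj
      have hjs : j ∈ s := (hmem j).mpr hγj
      have := s.min'_le _ hjs
      have := s.le_max' _ hjs
      apply hj
      rw [show ((k.toNat : ℤ)) = k by omega, ← hk]
      omega
  refine ⟨main, fun h => ?_⟩
  rcases main with h' | ⟨m, c, _, hd, _⟩
  · exact h'
  · exact absurd ⟨m, hd⟩ h
end
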